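/- arXiv:1805.10070 — 5 statements merged into one kernel-verified Lean document; each statement's English description precedes it below -/
import Mathlib

section
/- Let P be an ordered set of strings and let ←P denote the ordered set of strings whose set is ←P.S = {reverse(s) : s ∈ P.S} with the enumeration reverse(t_1), …, reverse(t_n). Then Dec_Pre computed for ←P is a bijection from Decomp_BWT(←P) onto Prefix(P.S), and under this bijection: (u,v) ∈ A_T(←P) iff Dec_Pre[u] is the longest proper prefix of Dec_Pre[v] in Prefix(P.S) (so (Decomp_BWT(←P), A_T(←P)) is isomorphic to the Aho–Corasick tree ACT(P.S)), and (u,v) ∈ A_F(←P) iff Dec_Pre[v] is the longest proper suffix of Dec_Pre[u] in Prefix(P.S) (so (Decomp_BWT(←P), A_F(←P)) is isomorphic to the Aho–Corasick failure-link graph ACFL(P.S)). -/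
namespace BwtXbw

variable {α β : Type*}

/-- An ordered set of strings: a nonempty list of distinct nonempty strings over `α`
(the list order is the enumeration `t_1, …, t_n`). -/
structure OSS (α : Type*) where
  strs : List (List α)
  strs_ne : strs ≠ []
  nodup : strs.Nodup
  mem_ne : ∀ s ∈ strs, s ≠ []

/-- Embed a symbol of `α` into `WithBot α`; `⊥` plays the role of the separator `$`,
which is smaller than every symbol of the alphabet. -/
def sym (a : α) : WithBot α := (a : WithBot α)

/-- The multi-string `m_P = t_1 $ t_2 $ ⋯ $ t_n $` over `WithBot α`. -/
def mP (P : OSS α) : List (WithBot α) :=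
  (P.strs.map (fun s => s.map sym ++ [⊥])).flatten

/-- `SA` is a (0-based) suffix array for `m`: a bijection of `[0, |m|)` onto itself
listing the suffixes of `m` in increasing lexicographic order. -/
def IsSuffixArray [LinearOrder α] (m : List (WithBot α)) (SA : ℕ → ℕ) : Prop :=
  Set.BijOn SA (Set.Iio m.length) (Set.Iio m.length) ∧
  ∀ i j : ℕ, i < j → j < m.length →
    List.Lex (· < ·) (m.drop (SA i)) (m.drop (SA j))

/-- `LRS(P)[i]` (0-based): number of symbols of `m` from position `SA i` up to (but not
including) the first separator at or after position `SA i`. -/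
def lrs [LinearOrder α] (m : List (WithBot α)) (SA : ℕ → ℕ) (i : ℕ) : ℕ :=
  ((m.drop (SA i)).takeWhile (fun c => decide (c ≠ ⊥))).length

/-- Length of the longest common prefix of two lists. -/
def lcpLen [DecidableEq β] : List β → List β → ℕ
  | a :: s, b :: t => if a = b then lcpLen s t + 1 else 0
  | _, _ => 0

/-- `LCP(P)[i] = min(LCP(m_P)[i], LRS(P)[i])` (0-based; `0` at `i = 0`). -/
def lcpP [LinearOrder α] (m : List (WithBot α)) (SA : ℕ → ℕ) (i : ℕ) : ℕ :=
  if i = 0 then 0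
  else min (lcpLen (m.drop (SA (i - 1))) (m.drop (SA i))) (lrs m SA i)

/-- `Decomp_BWT(P)`: the maximal integer intervals `[u.1, u.2] ⊆ [0, |m|)` such that
`LCP(P)[k] = LRS(P)[k]` for every interior position `k ∈ [u.1+1, u.2]`. -/
def DecompBWT [LinearOrder α] (m : List (WithBot α)) (SA : ℕ → ℕ) : Set (ℕ × ℕ) :=
  { u | u.1 ≤ u.2 ∧ u.2 < m.length ∧
        (∀ k, u.1 < k → k ≤ u.2 → lcpP m SA k = lrs m SA k) ∧
        (u.1 = 0 ∨ lcpP m SA u.1 ≠ lrs m SA u.1) ∧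
        (u.2 + 1 = m.length ∨ lcpP m SA (u.2 + 1) ≠ lrs m SA (u.2 + 1)) }

/-- `Dec_Pre[u]`: the reverse of `m[SA u.1 .. SA u.1 + LRS[u.1] − 1]`. -/
def decPre [LinearOrder α] (m : List (WithBot α)) (SA : ℕ → ℕ) (u : ℕ × ℕ) :
    List (WithBot α) :=
  ((m.drop (SA u.1)).take (lrs m SA u.1)).reverse

/-- `Prefix(←P.S)`: all prefixes (including the empty string) of the reversed strings of
`P.S`, viewed inside `WithBot α`. -/
def revPrefixes (P : OSS α) : Set (List (WithBot α)) :=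
  { p | ∃ s ∈ P.strs, p <+: s.reverse.map sym }

/-- `Prefix(P.S)`: all prefixes (including the empty string) of the strings of `P.S`,
viewed inside `WithBot α`. -/
def fwdPrefixes (P : OSS α) : Set (List (WithBot α)) :=
  { p | ∃ s ∈ P.strs, p <+: s.map sym }

/-- `BWT(P)[i]` (0-based): `m[SA i − 1]` if `SA i > 0`, and the last symbol `$ = ⊥`
of `m` otherwise. -/
def bwtArr (m : List (WithBot α)) (SA : ℕ → ℕ) (i : ℕ) : WithBot α :=
  if SA i = 0 then ⊥ else m.getD (SA i - 1) ⊥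

/-- `C[c]`: the number of positions of `m` holding a symbol strictly smaller than `c`. -/
def Cfun [LinearOrder α] (m : List (WithBot α)) (c : WithBot α) : ℕ :=
  (m.filter (fun b => decide (b < c))).length

/-- The Last-to-First mapping (0-based):
`LF[i] = C[BWT[i]] + #{k < i : BWT[k] = BWT[i]}`. -/
def LF [LinearOrder α] (m : List (WithBot α)) (SA : ℕ → ℕ) (i : ℕ) : ℕ :=
  Cfun m (bwtArr m SA i) +
    ((List.range i).filter (fun k => decide (bwtArr m SA k = bwtArr m SA i))).length

/-- The arc set `A_T(P)` on `Decomp_BWT(P)`. -/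
def AT [LinearOrder α] (m : List (WithBot α)) (SA : ℕ → ℕ) :
    Set ((ℕ × ℕ) × (ℕ × ℕ)) :=
  { uv | uv.1 ∈ DecompBWT m SA ∧ uv.2 ∈ DecompBWT m SA ∧
      ∃ x, uv.1.1 ≤ x ∧ x ≤ uv.1.2 ∧ bwtArr m SA x ≠ ⊥ ∧
        uv.2.1 ≤ LF m SA x ∧ LF m SA x ≤ uv.2.2 }

/-- Arc relation of the Aho–Corasick tree on the vertex set `Pref`:
`p` is the longest proper prefix of `q` belonging to `Pref`. -/
def ACTedge (Pref : Set (List β)) (p q : List β) : Prop :=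
  p ∈ Pref ∧ q ∈ Pref ∧ p ≠ q ∧ p <+: q ∧
    ∀ r ∈ Pref, r ≠ q → r <+: q → r.length ≤ p.length

/-- `k` is a failure candidate for the position `i`: `k < i` and
`LRS[k] ≤ LCP[l]` for all `l ∈ [k+1, i]`. -/
def FailCand [LinearOrder α] (m : List (WithBot α)) (SA : ℕ → ℕ) (i k : ℕ) : Prop :=
  k < i ∧ ∀ l, k < l → l ≤ i → lrs m SA k ≤ lcpP m SA l

/-- The arc set `A_F(P)` on `Decomp_BWT(P)`: the largest failure candidate for `u.1`
exists and lies in `v`. -/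
def AF [LinearOrder α] (m : List (WithBot α)) (SA : ℕ → ℕ) :
    Set ((ℕ × ℕ) × (ℕ × ℕ)) :=
  { uv | uv.1 ∈ DecompBWT m SA ∧ uv.2 ∈ DecompBWT m SA ∧
      ∃ k, FailCand m SA uv.1.1 k ∧ (∀ k', FailCand m SA uv.1.1 k' → k' ≤ k) ∧
        uv.2.1 ≤ k ∧ k ≤ uv.2.2 }

/-- Arc relation of the Aho–Corasick failure-link graph on the vertex set `Pref`:
`q` is the longest proper suffix of `p` belonging to `Pref`. -/
def ACFLedge (Pref : Set (List β)) (p q : List β) : Prop :=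
  p ∈ Pref ∧ q ∈ Pref ∧ p ≠ q ∧ q <:+ p ∧
    ∀ r ∈ Pref, r ≠ p → r <:+ p → r.length ≤ q.length

/-- The Run-Length measure `d_B(P) = #{i : BWT[i] ≠ BWT[i+1]}` (0-based, `i` ranging
over the first `|m| − 1` positions). -/
def dB [LinearOrder α] (m : List (WithBot α)) (SA : ℕ → ℕ) : ℕ :=
  ((List.range (m.length - 1)).filter
      (fun i => decide (bwtArr m SA i ≠ bwtArr m SA (i + 1)))).length

/-- `P` is topologically planar: for every prefix `p` of the reverse of some string of
`P.S`, the indices `r` with `p` a prefix of `reverse(t_r)` form a set of consecutive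
integers. -/
def TopPlanar [DecidableEq α] (P : OSS α) : Prop :=
  ∀ p : List α, (∃ s ∈ P.strs, p <+: s.reverse) →
    ∀ r₁ r₂ r₃ : ℕ, r₁ ≤ r₂ → r₂ ≤ r₃ → r₃ < P.strs.length →
      p <+: (P.strs.getD r₁ []).reverse → p <+: (P.strs.getD r₃ []).reverse →
      p <+: (P.strs.getD r₂ []).reverse

/-- `Letter[i]`: the first symbol of the suffix of rank `i`, i.e. `m[SA i]`. -/
def letterArr (m : List (WithBot α)) (SA : ℕ → ℕ) (i : ℕ) : WithBot α :=
  m.getD (SA i) ⊥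

/-- 0-based select: the position of the `(j+1)`-st occurrence of `c` in
`f 0, f 1, …, f (N−1)`. -/
def select0 [LinearOrder α] (f : ℕ → WithBot α) (N : ℕ) (c : WithBot α) (j : ℕ) : ℕ :=
  (((List.range N).filter (fun k => decide (f k = c)))).getD j 0

/-- The inverse Last-to-First mapping (0-based):
`RLF[i] = select_{Letter[i]}(BWT, i − C[Letter[i]])`. -/
def RLF [LinearOrder α] (m : List (WithBot α)) (SA : ℕ → ℕ) (i : ℕ) : ℕ :=
  select0 (bwtArr m SA) m.length (letterArr m SA i)
    (i - Cfun m (letterArr m SA i))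

/-- `d_A(T') = #{i : T'[i] ≠ T'[i+1]}`, the number of adjacent mismatches. -/
def dA [DecidableEq β] : List β → ℕ
  | a :: b :: t => (if a = b then 0 else 1) + dA (b :: t)
  | _ => 0

/-- `T'` is valid for the block decomposition `B` (an interval partition given by the
lengths of the blocks): `T'` splits into blocks of the same lengths as those of `B`,
with the same symbol set blockwise. -/
def ValidArr [DecidableEq β] (B : List (List β)) (T' : List β) : Prop :=
  ∃ B' : List (List β),
    List.Forall₂ (fun b b' => b.length = b'.length ∧ b.toFinset = b'.toFinset) B B' ∧
    B'.flatten = T'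

/-- `T'` is optimal for the block decomposition `B`: valid and of minimal `d_A`. -/
def OptimalArr [DecidableEq β] (B : List (List β)) (T' : List β) : Prop :=
  ValidArr B T' ∧ ∀ T'' : List β, ValidArr B T'' → dA T' ≤ dA T''


/-! ### Auxiliary lemmas -/
set_option linter.unusedSectionVars false

section ListAux

variable {γ : Type*}

theorem lcpLen_le_left [DecidableEq γ] : ∀ s t : List γ, lcpLen s t ≤ s.length
  | [], _ => by simp [lcpLen]
  | a :: s, [] => by simp [lcpLen]
  | a :: s, b :: t => by
    by_cases h : a = b <;> simp [lcpLen, h, Nat.succ_le_succ, lcpLen_le_left s t]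

theorem take_lcpLen_eq [DecidableEq γ] :
    ∀ s t : List γ, s.take (lcpLen s t) = t.take (lcpLen s t)
  | [], t => by simp [lcpLen]
  | a :: s, [] => by simp [lcpLen]
  | a :: s, b :: t => by
    by_cases h : a = b
    · simp [lcpLen, h, take_lcpLen_eq s t]
    · simp [lcpLen, h]

theorem length_le_lcpLen [DecidableEq γ] :
    ∀ {p s t : List γ}, p <+: s → p <+: t → p.length ≤ lcpLen s t
  | [], _, _, _, _ => by simp
  | c :: p, s, t, hs, ht => by
    obtain ⟨s', rfl⟩ := hs
    obtain ⟨t', rfl⟩ := ht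
    simpa [lcpLen] using length_le_lcpLen (p.prefix_append s') (p.prefix_append t')

theorem prefix_takeWhile {pred : γ → Bool} {p l : List γ} (h : p <+: l)
    (hp : ∀ c ∈ p, pred c = true) : p <+: l.takeWhile pred := by
  obtain ⟨r, rfl⟩ := h
  rw [List.takeWhile_append, if_pos]
  · exact p.prefix_append _
  · rw [List.takeWhile_eq_self_iff.2 hp]

theorem takeWhile_take_length {pred : γ → Bool} (l : List γ) :
    l.take (l.takeWhile pred).length = l.takeWhile pred :=
  ((List.prefix_iff_eq_take).1 (List.takeWhile_prefix pred)).symm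

end ListAux

section LexAux

variable {γ : Type*} [LinearOrder γ]

theorem lex_cons_iff {a : γ} {s t : List γ} :
    List.Lex (· < ·) (a :: s) (a :: t) ↔ List.Lex (· < ·) s t := by
  constructor
  · intro h
    cases h with
    | cons h => exact h
    | rel h => exact absurd h (lt_irrefl a)
  · exact List.Lex.cons

theorem lex_append_iff {p s t : List γ} :
    List.Lex (· < ·) (p ++ s) (p ++ t) ↔ List.Lex (· < ·) s t := by
  induction p with
  | nil => simp
  | cons a p ih => simpa [lex_cons_iff] using ih

theorem lex_append_cons {a b : γ} (h : a < b) (p s t : List γ) :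
    List.Lex (· < ·) (p ++ a :: s) (p ++ b :: t) :=
  lex_append_iff.2 (List.Lex.rel h)

theorem lex_sandwich :
    ∀ {p a b c : List γ}, p <+: a → p <+: c →
      List.Lex (· < ·) a b → List.Lex (· < ·) b c → p <+: b
  | [], _, b, _, _, _, _, _ => List.nil_prefix
  | x :: p, a, b, c, ha, hc, hab, hbc => by
    obtain ⟨a', rfl⟩ := ha
    obtain ⟨c', rfl⟩ := hc
    rw [List.cons_append] at hab hbc
    cases hab with
    | rel hxy =>
      exfalso
      rename_i y b'
      cases hbc with
      | rel hyx => exact absurd hxy (asymm hyx)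
      | cons h2 => exact absurd hxy (lt_irrefl x)
    | cons h =>
      rename_i b'
      have hbc' : List.Lex (· < ·) b' (p ++ c') := by
        cases hbc with
        | rel hxx => exact absurd hxx (lt_irrefl x)
        | cons h2 => exact h2
      have := lex_sandwich (p.prefix_append a') (p.prefix_append c') h hbc'
      exact (List.cons_prefix_cons).2 ⟨rfl, this⟩

theorem lex_cons_le {a b : γ} {s t : List γ}
    (h : List.Lex (· < ·) (a :: s) (b :: t)) : a ≤ b := by
  cases h with
  | rel h => exact le_of_lt h
  | cons _ => exact le_rfl

end LexAux

section CountAux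

variable {γ : Type*}

theorem length_filter_range (n : ℕ) (f : ℕ → Bool) :
    ((List.range n).filter f).length = ((Finset.range n).filter (fun i => f i = true)).card := by
  rw [← List.toFinset_card_of_nodup (List.Nodup.filter f List.nodup_range)]
  congr 1
  ext x
  simp [List.mem_filter]

theorem length_filter_eq_sum (d : γ) (pred : γ → Bool) :
    ∀ l : List γ,
      (l.filter pred).length
        = ∑ i ∈ Finset.range l.length, (if pred (l.getD i d) = true then 1 else 0)
  | [] => by simp
  | a :: t => by
    rw [List.length_cons, Finset.sum_range_succ']
    simp only [List.getD_cons_succ, List.getD_cons_zero]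
    rw [← length_filter_eq_sum d pred t]
    by_cases h : pred a <;> simp [List.filter_cons, h]

theorem Cfun_eq [LinearOrder γ] (m : List (WithBot γ)) (c : WithBot γ) :
    Cfun m c = ((Finset.range m.length).filter (fun p => m.getD p ⊥ < c)).card := by
  rw [Cfun, length_filter_eq_sum ⊥ _ m, Finset.card_filter]
  exact Finset.sum_congr rfl (fun i _ => by by_cases h : m.getD i ⊥ < c <;> simp [h])

end CountAux

section Struct

variable [LinearOrder α]

/-- Structure of suffixes of a flattened separator-terminated list. -/
theorem flat_drop (L : List (List α)) :
    ∀ p, p < ((L.map (fun s => s.map sym ++ [⊥])).flatten).length →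
      ∃ s ∈ L, ∃ w rest, w <:+ s.map (sym (α := α)) ∧
        ((L.map (fun s => s.map sym ++ [⊥])).flatten).drop p = w ++ ⊥ :: rest := by
  induction L with
  | nil => intro p hp; simp at hp
  | cons s L ih =>
    intro p hp
    simp only [List.map_cons, List.flatten_cons] at hp ⊢
    by_cases h : p < (s.map sym ++ [⊥]).length
    · refine ⟨s, by simp, (s.map sym).drop p, (L.map (fun s => s.map sym ++ [⊥])).flatten,
        List.drop_suffix _ _, ?_⟩
      have hps : p ≤ (s.map sym).length := by
        simp only [List.length_append, List.length_singleton] at h; omega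
      rw [List.drop_append, List.drop_append,
        Nat.sub_eq_zero_of_le hps, Nat.sub_eq_zero_of_le (le_of_lt h), List.drop_zero,
        List.drop_zero]
      simp
    · push_neg at h
      obtain ⟨t, ht, w, rest, hw, hdrop⟩ := ih (p - (s.map sym ++ [⊥]).length) (by
        rw [List.length_append] at hp; omega)
      refine ⟨t, by simp [ht], w, rest, hw, ?_⟩
      rw [List.drop_append, List.drop_eq_nil_of_le h, List.nil_append, hdrop]

theorem flat_occ (L : List (List α)) :
    ∀ s ∈ L, ∀ w, w <:+ s.map (sym (α := α)) →
      ∃ p rest, p < ((L.map (fun s => s.map sym ++ [⊥])).flatten).length ∧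
        ((L.map (fun s => s.map sym ++ [⊥])).flatten).drop p = w ++ ⊥ :: rest := by
  induction L with
  | nil => intro s hs; simp at hs
  | cons a L ih =>
    intro s hs w hw
    simp only [List.map_cons, List.flatten_cons]
    rcases List.mem_cons.1 hs with rfl | hs
    · obtain ⟨pre, hpre⟩ := hw
      refine ⟨pre.length, (L.map (fun s => s.map sym ++ [⊥])).flatten, ?_, ?_⟩
      · have h1 : pre.length + w.length = s.length := by
          have := congrArg List.length hpre; simpa using this
        simp only [List.length_append, List.length_map, List.length_singleton]
        omega
      · have : (s.map (sym (α := α)) ++ [⊥]) ++ (L.map (fun s => s.map sym ++ [⊥])).flatten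
            = pre ++ (w ++ ⊥ :: (L.map (fun s => s.map sym ++ [⊥])).flatten) := by
          rw [← hpre]; simp
        rw [this, List.drop_append, List.drop_eq_nil_of_le le_rfl,
          Nat.sub_self, List.nil_append, List.drop_zero]
    · obtain ⟨p, rest, hp, hdrop⟩ := ih s hs w hw
      refine ⟨(a.map sym ++ [⊥]).length + p, rest, ?_, ?_⟩
      · simp only [List.length_append]; omega
      · rw [List.drop_append, List.drop_eq_nil_of_le (by omega),
          List.nil_append, Nat.add_comm, Nat.add_sub_cancel, hdrop]

theorem suffix_map_sym_nobot {s : List α} {w : List (WithBot α)}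
    (hw : w <:+ s.map sym) : ∀ c ∈ w, c ≠ ⊥ := by
  intro c hc
  have := hw.subset hc
  simp only [List.mem_map] at this
  obtain ⟨a, _, rfl⟩ := this
  exact WithBot.coe_ne_bot

theorem takeWhile_sep (w rest : List (WithBot α)) (hw : ∀ c ∈ w, c ≠ ⊥) :
    (w ++ ⊥ :: rest).takeWhile (fun c => decide (c ≠ ⊥)) = w := by
  have h1 : (w.takeWhile (fun c => decide (c ≠ ⊥))) = w :=
    List.takeWhile_eq_self_iff.2 (fun a ha => by simpa using hw a ha)
  rw [List.takeWhile_append, if_pos (by rw [h1])]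
  simp

theorem mP_length_pos (Q : OSS α) : 0 < (mP Q).length := by
  cases hQs : Q.strs with
  | nil => exact absurd hQs Q.strs_ne
  | cons s L => simp [mP, hQs]

theorem mP_drop (Q : OSS α) {p : ℕ} (hp : p < (mP Q).length) :
    ∃ s ∈ Q.strs, ∃ w rest, w <:+ s.map sym ∧ (mP Q).drop p = w ++ ⊥ :: rest :=
  flat_drop Q.strs p hp

theorem mP_last (Q : OSS α) : (mP Q).getD ((mP Q).length - 1) ⊥ = ⊥ := by
  have hN := mP_length_pos Q
  obtain ⟨s, _, w, rest, hw, hdrop⟩ := mP_drop Q (p := (mP Q).length - 1) (by omega)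
  have hlen : ((mP Q).drop ((mP Q).length - 1)).length = 1 := by
    rw [List.length_drop]; omega
  rw [hdrop] at hlen
  simp only [List.length_append, List.length_cons] at hlen
  have hw0 : w = [] := List.eq_nil_of_length_eq_zero (by omega)
  have hr0 : rest = [] := List.eq_nil_of_length_eq_zero (by omega)
  rw [hw0, hr0] at hdrop
  have h1 : (mP Q).length - 1 < (mP Q).length := by omega
  rw [List.getD_eq_getElem _ _ h1]
  have h3 := (List.drop_eq_getElem_cons h1).symm.trans hdrop
  simpa using (List.cons_eq_cons.1 h3).1

end Struct

section Main

variable [LinearOrder α] {Q : OSS α} {SA : ℕ → ℕ}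

/-- The string part of the suffix of rank `i`. -/
def spA (m : List (WithBot α)) (SA : ℕ → ℕ) (i : ℕ) : List (WithBot α) :=
  (m.drop (SA i)).takeWhile (fun c => decide (c ≠ ⊥))

theorem lrs_eq_sp (m : List (WithBot α)) (SA : ℕ → ℕ) (i : ℕ) :
    lrs m SA i = (spA m SA i).length := rfl

theorem decPre_eq (m : List (WithBot α)) (SA : ℕ → ℕ) (u : ℕ × ℕ) :
    decPre m SA u = (spA m SA u.1).reverse := by
  rw [decPre, lrs_eq_sp, spA, takeWhile_take_length]

theorem sp_prefix (m : List (WithBot α)) (SA : ℕ → ℕ) (i : ℕ) :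
    spA m SA i <+: m.drop (SA i) := List.takeWhile_prefix _

theorem sp_nobot (m : List (WithBot α)) (SA : ℕ → ℕ) (i : ℕ) :
    ∀ c ∈ spA m SA i, c ≠ ⊥ := fun c hc => by
  simpa using List.mem_takeWhile_imp hc

theorem SA_lt (hSA : IsSuffixArray (mP Q) SA) {i : ℕ} (hi : i < (mP Q).length) :
    SA i < (mP Q).length := hSA.1.1 hi

theorem exists_rank (hSA : IsSuffixArray (mP Q) SA) {p : ℕ} (hp : p < (mP Q).length) :
    ∃ i, i < (mP Q).length ∧ SA i = p := by
  obtain ⟨i, hi, hip⟩ := hSA.1.2.2 hp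
  exact ⟨i, hi, hip⟩

theorem rank_lt_of_lex (hSA : IsSuffixArray (mP Q) SA) {i j : ℕ}
    (hi : i < (mP Q).length) (hj : j < (mP Q).length)
    (h : List.Lex (· < ·) ((mP Q).drop (SA i)) ((mP Q).drop (SA j))) : i < j := by
  rcases lt_trichotomy i j with h1 | h1 | h1
  · exact h1
  · subst h1; exact absurd h (irrefl _)
  · exact absurd h (asymm (hSA.2 j i h1 hi))

theorem sp_spec (Q : OSS α) (SA : ℕ → ℕ) {i : ℕ} (h : SA i < (mP Q).length) :
    ∃ rest, (mP Q).drop (SA i) = spA (mP Q) SA i ++ ⊥ :: rest ∧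
      ∃ s ∈ Q.strs, spA (mP Q) SA i <:+ s.map sym := by
  obtain ⟨s, hs, w, rest, hw, hdrop⟩ := mP_drop Q h
  have hsp : spA (mP Q) SA i = w := by
    rw [spA, hdrop, takeWhile_sep w rest (suffix_map_sym_nobot hw)]
  exact ⟨rest, by rw [hdrop, hsp], s, hs, hsp ▸ hw⟩

/-- Workhorse: if the string part of rank `b` is a prefix of the suffix of an
earlier rank `a`, the string parts agree. -/
theorem sp_eq_of_prefix (hSA : IsSuffixArray (mP Q) SA) {a b : ℕ}
    (ha : a < (mP Q).length) (hb : b < (mP Q).length) (hab : a ≤ b)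
    (h : spA (mP Q) SA b <+: (mP Q).drop (SA a)) : spA (mP Q) SA a = spA (mP Q) SA b := by
  have h1 : spA (mP Q) SA b <+: spA (mP Q) SA a := by
    refine prefix_takeWhile h ?_
    intro c hc
    exact List.mem_takeWhile_imp (p := fun c => decide (c ≠ ⊥))
      (l := (mP Q).drop (SA b)) hc
  obtain ⟨r, hr⟩ := h1
  cases r with
  | nil => rw [← hr]; simp
  | cons d r' =>
    exfalso
    have hd : d ≠ ⊥ := sp_nobot (mP Q) SA a d (by rw [← hr]; simp)
    obtain ⟨resta, hda, _⟩ := sp_spec Q SA (SA_lt hSA ha)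
    obtain ⟨restb, hdb, _⟩ := sp_spec Q SA (SA_lt hSA hb)
    rcases Nat.lt_or_ge a b with hab' | hab'
    · have hlex := hSA.2 a b hab' hb
      rw [hda, ← hr, hdb] at hlex
      rw [List.append_assoc] at hlex
      have hlex' := lex_append_iff.1 hlex
      cases hlex' with
      | rel hlt => exact absurd hlt (by simp)
      | cons _ => exact hd rfl
    · have hab2 : a = b := le_antisymm hab hab'
      subst hab2
      have := congrArg List.length hr
      simp at this
  -- done

theorem sandwich_sp (hSA : IsSuffixArray (mP Q) SA) {p : List (WithBot α)} {i k j : ℕ}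
    (hik : i ≤ k) (hkj : k ≤ j) (hj : j < (mP Q).length)
    (hpi : p <+: (mP Q).drop (SA i)) (hpj : p <+: (mP Q).drop (SA j)) :
    p <+: (mP Q).drop (SA k) := by
  rcases eq_or_lt_of_le hik with rfl | hik'
  · exact hpi
  rcases eq_or_lt_of_le hkj with rfl | hkj'
  · exact hpj
  exact lex_sandwich hpi hpj (hSA.2 i k hik' (lt_of_le_of_lt hkj hj)) (hSA.2 k j hkj' hj)

theorem sp_block (hSA : IsSuffixArray (mP Q) SA) {i k j : ℕ}
    (hik : i ≤ k) (hkj : k ≤ j) (hj : j < (mP Q).length)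
    (hij : spA (mP Q) SA i = spA (mP Q) SA j) : spA (mP Q) SA k = spA (mP Q) SA i := by
  have hpi : spA (mP Q) SA j <+: (mP Q).drop (SA i) := hij ▸ sp_prefix (mP Q) SA i
  have hpk : spA (mP Q) SA j <+: (mP Q).drop (SA k) :=
    sandwich_sp hSA hik hkj hj hpi (sp_prefix (mP Q) SA j)
  rw [sp_eq_of_prefix hSA (lt_of_le_of_lt hkj hj) hj hkj hpk, hij]

theorem lcp_iff (hSA : IsSuffixArray (mP Q) SA) {k : ℕ} (hk : 1 ≤ k)
    (hkN : k < (mP Q).length) :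
    lcpP (mP Q) SA k = lrs (mP Q) SA k ↔ spA (mP Q) SA (k - 1) = spA (mP Q) SA k := by
  have hk0 : k ≠ 0 := by omega
  rw [lcpP, if_neg hk0]
  constructor
  · intro h
    have hle : lrs (mP Q) SA k ≤ lcpLen ((mP Q).drop (SA (k-1))) ((mP Q).drop (SA k)) := by
      rcases Nat.le_total (lcpLen ((mP Q).drop (SA (k-1))) ((mP Q).drop (SA k)))
        (lrs (mP Q) SA k) with h1 | h1
      · rw [min_eq_left h1] at h; omega
      · exact h1
    have htk := take_lcpLen_eq ((mP Q).drop (SA (k-1))) ((mP Q).drop (SA k))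
    have htake : ((mP Q).drop (SA (k-1))).take (lrs (mP Q) SA k)
        = ((mP Q).drop (SA k)).take (lrs (mP Q) SA k) := by
      have := congrArg (List.take (lrs (mP Q) SA k)) htk
      rwa [List.take_take, List.take_take, min_eq_left hle] at this
    have hpre : spA (mP Q) SA k <+: (mP Q).drop (SA (k-1)) := by
      rw [List.prefix_iff_eq_take, ← lrs_eq_sp, htake, lrs_eq_sp, spA, takeWhile_take_length]
    exact sp_eq_of_prefix hSA (by omega) hkN (by omega) hpre
  · intro h
    have h1 : spA (mP Q) SA k <+: (mP Q).drop (SA (k-1)) := h ▸ sp_prefix (mP Q) SA (k-1)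
    have h2 := length_le_lcpLen h1 (sp_prefix (mP Q) SA k)
    rw [← lrs_eq_sp] at h2
    exact min_eq_right h2

theorem mem_decomp_sp_const (hSA : IsSuffixArray (mP Q) SA) {u : ℕ × ℕ}
    (hu : u ∈ DecompBWT (mP Q) SA) {x : ℕ} (h1 : u.1 ≤ x) (h2 : x ≤ u.2) :
    spA (mP Q) SA x = spA (mP Q) SA u.1 := by
  induction x, h1 using Nat.le_induction with
  | base => rfl
  | succ x hx ih =>
    have hx2 : x ≤ u.2 := by omega
    have h2N := hu.2.1
    have hlcp := hu.2.2.1 (x + 1) (by omega) h2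
    have := (lcp_iff hSA (by omega) (by omega : x + 1 < (mP Q).length)).1 hlcp
    simp only [Nat.add_sub_cancel] at this
    rw [← this]
    exact ih hx2

theorem mem_decomp_of_sp (hSA : IsSuffixArray (mP Q) SA) {u : ℕ × ℕ}
    (hu : u ∈ DecompBWT (mP Q) SA) {k : ℕ} (hk : k < (mP Q).length)
    (h : spA (mP Q) SA k = spA (mP Q) SA u.1) : u.1 ≤ k ∧ k ≤ u.2 := by
  obtain ⟨h12, h2N, hint, hbl, hbr⟩ := hu
  constructor
  · by_contra hlt
    push_neg at hlt
    have hu1N : u.1 < (mP Q).length := by omega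
    have h1 : spA (mP Q) SA (u.1 - 1) = spA (mP Q) SA k :=
      sp_block hSA (by omega : k ≤ u.1 - 1) (by omega) hu1N h
    have h2 : lcpP (mP Q) SA u.1 = lrs (mP Q) SA u.1 :=
      (lcp_iff hSA (by omega) hu1N).2 (by rw [h1, h])
    rcases hbl with h0 | h0
    · omega
    · exact h0 h2
  · by_contra hlt
    push_neg at hlt
    have h1 : spA (mP Q) SA (u.2 + 1) = spA (mP Q) SA u.1 :=
      sp_block hSA (by omega : u.1 ≤ u.2 + 1) (by omega) hk h.symm
    have h2 : spA (mP Q) SA u.2 = spA (mP Q) SA u.1 :=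
      mem_decomp_sp_const hSA ⟨h12, h2N, hint, hbl, hbr⟩ h12 le_rfl
    have h3 : lcpP (mP Q) SA (u.2 + 1) = lrs (mP Q) SA (u.2 + 1) :=
      (lcp_iff hSA (by omega) (by omega)).2 (by simp only [Nat.add_sub_cancel]; rw [h2, h1])
    rcases hbr with h0 | h0
    · omega
    · exact h0 h3

theorem decomp_exists (hSA : IsSuffixArray (mP Q) SA) {k : ℕ} (hk : k < (mP Q).length) :
    ∃ u ∈ DecompBWT (mP Q) SA, spA (mP Q) SA u.1 = spA (mP Q) SA k ∧
      u.1 ≤ k ∧ k ≤ u.2 := by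
  classical
  set F := (Finset.range (mP Q).length).filter
    (fun z => spA (mP Q) SA z = spA (mP Q) SA k) with hF
  have hkF : k ∈ F := by simp [hF, hk]
  have hFne : F.Nonempty := ⟨k, hkF⟩
  set i := F.min' hFne with hi
  set j := F.max' hFne with hj
  have hiF : i ∈ F := F.min'_mem hFne
  have hjF : j ∈ F := F.max'_mem hFne
  have hiN : i < (mP Q).length := by have := (Finset.mem_filter.1 hiF).1; simpa using this
  have hjN : j < (mP Q).length := by have := (Finset.mem_filter.1 hjF).1; simpa using this
  have hisp : spA (mP Q) SA i = spA (mP Q) SA k := (Finset.mem_filter.1 hiF).2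
  have hjsp : spA (mP Q) SA j = spA (mP Q) SA k := (Finset.mem_filter.1 hjF).2
  have hik : i ≤ k := F.min'_le k hkF
  have hkj : k ≤ j := F.le_max' k hkF
  have hcont : ∀ z, i ≤ z → z ≤ j → spA (mP Q) SA z = spA (mP Q) SA k := by
    intro z h1 h2
    rw [sp_block hSA h1 h2 hjN (by rw [hisp, hjsp]), hisp]
  have hmemF : ∀ z, i ≤ z → z ≤ j → z ∈ F := by
    intro z h1 h2
    simp only [hF, Finset.mem_filter, Finset.mem_range]
    exact ⟨by omega, hcont z h1 h2⟩
  refine ⟨(i, j), ⟨by dsimp; omega, hjN, ?_, ?_, ?_⟩, hisp, hik, hkj⟩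
  · intro l h1 h2
    refine (lcp_iff hSA (by omega) (by omega)).2 ?_
    rw [hcont (l-1) (by omega) (by omega), hcont l (by omega) h2]
  · dsimp only
    rcases Nat.eq_zero_or_pos i with h0 | h0
    · exact Or.inl h0
    · refine Or.inr (fun hcl => ?_)
      have h1 := (lcp_iff hSA (by omega) hiN).1 hcl
      have h2 : i - 1 ∈ F := by
        simp only [hF, Finset.mem_filter, Finset.mem_range]
        exact ⟨by omega, by rw [h1, hisp]⟩
      have := F.min'_le _ h2
      omega
  · dsimp only
    rcases Nat.lt_or_ge (j + 1) (mP Q).length with h0 | h0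
    · refine Or.inr (fun hcl => ?_)
      have h1 := (lcp_iff hSA (by omega) h0).1 hcl
      simp only [Nat.add_sub_cancel] at h1
      have h2 : j + 1 ∈ F := by
        simp only [hF, Finset.mem_filter, Finset.mem_range]
        exact ⟨h0, by rw [← h1, hjsp]⟩
      have := F.le_max' _ h2
      omega
    · exact Or.inl (by omega)

theorem decomp_unique (hSA : IsSuffixArray (mP Q) SA) {u v : ℕ × ℕ}
    (hu : u ∈ DecompBWT (mP Q) SA) (hv : v ∈ DecompBWT (mP Q) SA)
    (h : spA (mP Q) SA u.1 = spA (mP Q) SA v.1) : u = v := by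
  have huN : u.1 < (mP Q).length := by have := hu.1; have := hu.2.1; omega
  have hvN : v.1 < (mP Q).length := by have := hv.1; have := hv.2.1; omega
  have h1 := mem_decomp_of_sp hSA hv huN h
  have h2 := mem_decomp_of_sp hSA hu hvN h.symm
  have hu2 : spA (mP Q) SA u.2 = spA (mP Q) SA u.1 :=
    mem_decomp_sp_const hSA hu hu.1 le_rfl
  have hv2 : spA (mP Q) SA v.2 = spA (mP Q) SA v.1 :=
    mem_decomp_sp_const hSA hv hv.1 le_rfl
  have h3 := mem_decomp_of_sp hSA hv (by have := hu.2.1; omega : u.2 < (mP Q).length)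
    (by rw [hu2, h])
  have h4 := mem_decomp_of_sp hSA hu (by have := hv.2.1; omega : v.2 < (mP Q).length)
    (by rw [hv2, ← h])
  have : u.1 = v.1 := by omega
  have : u.2 = v.2 := by omega
  exact Prod.ext ‹u.1 = v.1› ‹u.2 = v.2›

theorem drop_succ_getD {l : List (WithBot α)} {p : ℕ} (hp : p < l.length) :
    l.drop p = l.getD p ⊥ :: l.drop (p + 1) := by
  rw [List.drop_eq_getElem_cons hp, List.getD_eq_getElem _ _ hp]

theorem head_le (hSA : IsSuffixArray (mP Q) SA) {i j : ℕ} (hij : i < j)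
    (hj : j < (mP Q).length) : (mP Q).getD (SA i) ⊥ ≤ (mP Q).getD (SA j) ⊥ := by
  have hi' := SA_lt hSA (lt_trans hij hj)
  have hj' := SA_lt hSA hj
  have hlex := hSA.2 i j hij hj
  rw [drop_succ_getD hi', drop_succ_getD hj'] at hlex
  exact lex_cons_le hlex

/-- The inverse of the suffix array. -/
noncomputable def invSA (SA : ℕ → ℕ) (N : ℕ) : ℕ → ℕ :=
  Function.invFunOn SA (Set.Iio N)

theorem invSA_spec (hSA : IsSuffixArray (mP Q) SA) {p : ℕ} (hp : p < (mP Q).length) :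
    invSA SA (mP Q).length p < (mP Q).length ∧ SA (invSA SA (mP Q).length p) = p := by
  obtain ⟨i, hi, rfl⟩ := exists_rank hSA hp
  have hex : ∃ a ∈ Set.Iio (mP Q).length, SA a = SA i := ⟨i, hi, rfl⟩
  exact ⟨Function.invFunOn_mem hex, Function.invFunOn_eq hex⟩

theorem invSA_SA (hSA : IsSuffixArray (mP Q) SA) {i : ℕ} (hi : i < (mP Q).length) :
    invSA SA (mP Q).length (SA i) = i := by
  have h := invSA_spec hSA (SA_lt hSA hi)
  exact hSA.1.2.1 h.1 hi h.2

theorem card_head_lt (hSA : IsSuffixArray (mP Q) SA) (c : WithBot α) :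
    ((Finset.range (mP Q).length).filter (fun z => (mP Q).getD (SA z) ⊥ < c)).card
      = Cfun (mP Q) c := by
  rw [Cfun_eq]
  apply Finset.card_nbij (fun i => SA i)
  · intro a ha
    simp only [Finset.coe_filter, Set.mem_setOf_eq, Finset.mem_filter, Finset.mem_range] at ha ⊢
    exact ⟨SA_lt hSA ha.1, ha.2⟩
  · intro a ha b hb hab
    simp only [Finset.coe_filter, Set.mem_setOf_eq, Finset.mem_range] at ha hb
    exact hSA.1.2.1 ha.1 hb.1 hab
  · intro p hp
    simp only [Finset.coe_filter, Set.mem_setOf_eq, Finset.mem_range] at hp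
    obtain ⟨i, hi, rfl⟩ := exists_rank hSA hp.1
    exact ⟨i, by
      simp only [Finset.coe_filter, Set.mem_setOf_eq, Finset.mem_range]
      exact ⟨hi, hp.2⟩, rfl⟩

theorem LF_spec (hSA : IsSuffixArray (mP Q) SA) {x : ℕ} (hx : x < (mP Q).length)
    (hb : bwtArr (mP Q) SA x ≠ ⊥) :
    LF (mP Q) SA x < (mP Q).length ∧ SA (LF (mP Q) SA x) = SA x - 1 := by
  classical
  set N := (mP Q).length with hN
  have hSAx0 : SA x ≠ 0 := fun h => hb (by rw [bwtArr, if_pos h])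
  have hSAxN := SA_lt hSA hx
  set c := bwtArr (mP Q) SA x with hc
  have hcval : c = (mP Q).getD (SA x - 1) ⊥ := by rw [hc, bwtArr, if_neg hSAx0]
  obtain ⟨y, hyN, hySA⟩ := exists_rank hSA (p := SA x - 1) (by omega)
  have hheady : (mP Q).getD (SA y) ⊥ = c := by rw [hySA, ← hcval]
  have hdropy : (mP Q).drop (SA y) = c :: (mP Q).drop (SA x) := by
    rw [drop_succ_getD (by rw [hySA]; omega : SA y < N), hheady, hySA,
      Nat.sub_add_cancel (by omega)]
  -- the two finsets
  set A := (Finset.range N).filter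
    (fun z => z < y ∧ (mP Q).getD (SA z) ⊥ = c) with hA
  set B := (Finset.range x).filter (fun k => bwtArr (mP Q) SA k = c) with hB
  -- Step B : y = Cfun c + A.card
  have hsplit : (Finset.range N).filter (fun z => z < y)
      = ((Finset.range N).filter (fun z => (mP Q).getD (SA z) ⊥ < c)) ∪ A := by
    ext z
    simp only [hA, Finset.mem_filter, Finset.mem_union, Finset.mem_range]
    constructor
    · rintro ⟨hzN, hzy⟩
      have hle : (mP Q).getD (SA z) ⊥ ≤ c := hheady ▸ head_le hSA hzy hyN
      rcases lt_or_eq_of_le hle with h | h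
      · exact Or.inl ⟨hzN, h⟩
      · exact Or.inr ⟨hzN, hzy, h⟩
    · rintro (⟨hzN, hlt⟩ | ⟨hzN, hzy, _⟩)
      · refine ⟨hzN, ?_⟩
        by_contra hyz
        push_neg at hyz
        rcases eq_or_lt_of_le hyz with rfl | hyz'
        · exact absurd (hheady ▸ hlt) (lt_irrefl _)
        · exact absurd (lt_of_le_of_lt (hheady ▸ head_le hSA hyz' hzN) hlt)
            (lt_irrefl _)
      · exact ⟨hzN, hzy⟩
  have hdisj : Disjoint ((Finset.range N).filter (fun z => (mP Q).getD (SA z) ⊥ < c)) A := by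
    rw [Finset.disjoint_left]
    intro z hz1 hz2
    simp only [hA, Finset.mem_filter, Finset.mem_range] at hz1 hz2
    exact absurd (hz2.2.2 ▸ hz1.2) (lt_irrefl _)
  have hcount1 : ((Finset.range N).filter (fun z => z < y)).card = y := by
    have he : (Finset.range N).filter (fun z => z < y) = Finset.range y := by
      ext z
      simp only [Finset.mem_filter, Finset.mem_range]
      exact ⟨fun h => h.2, fun h => ⟨lt_trans h hyN, h⟩⟩
    rw [he, Finset.card_range]
  have hyCard : y = Cfun (mP Q) c + A.card := by
    have hcc := congrArg Finset.card hsplit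
    rw [hcount1, Finset.card_union_of_disjoint hdisj, card_head_lt hSA c] at hcc
    exact hcc
  have hcbot : c ≠ ⊥ := hb
  have hstep : ∀ z, z < N → (mP Q).getD (SA z) ⊥ = c → SA z + 1 < N := by
    intro z hzN hhz
    have hz1 : SA z < N := SA_lt hSA hzN
    rcases eq_or_lt_of_le (by omega : SA z + 1 ≤ N) with h | h
    · exfalso
      have h2 : SA z = N - 1 := by omega
      rw [h2] at hhz
      exact hcbot (by rw [← hhz]; exact mP_last Q)
    · exact h
  have hAB : A.card = B.card := by
    apply Finset.card_nbij (fun z => invSA SA N (SA z + 1))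
    · intro z hz
      simp only [hA, hB, Finset.coe_filter, Set.mem_setOf_eq, Finset.mem_filter, Finset.mem_range] at hz ⊢
      obtain ⟨hzN, hzy, hhz⟩ := hz
      have hz1 : SA z < N := SA_lt hSA hzN
      have hlt : SA z + 1 < N := hstep z hzN hhz
      obtain ⟨hkN, hkSA⟩ := invSA_spec hSA hlt
      have hdropz : (mP Q).drop (SA z)
          = c :: (mP Q).drop (SA (invSA SA N (SA z + 1))) := by
        rw [drop_succ_getD hz1, hhz, hkSA]
      have hbwtk : bwtArr (mP Q) SA (invSA SA N (SA z + 1)) = c := by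
        rw [bwtArr, if_neg (by rw [hkSA]; exact Nat.succ_ne_zero _), hkSA]
        simpa using hhz
      refine ⟨?_, hbwtk⟩
      have hlex := hSA.2 z y hzy hyN
      rw [hdropz, hdropy] at hlex
      exact rank_lt_of_lex hSA hkN hx (lex_cons_iff.1 hlex)
    · intro a ha b hb' hab
      simp only [hA, Finset.coe_filter, Set.mem_setOf_eq, Finset.mem_range] at ha hb'
      have hea := (invSA_spec hSA (hstep a ha.1 ha.2.2)).2
      have heb := (invSA_spec hSA (hstep b hb'.1 hb'.2.2)).2
      have h1 : SA a + 1 = SA b + 1 := by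
        rw [← hea, ← heb]
        exact congrArg SA hab
      exact hSA.1.2.1 ha.1 hb'.1 (by omega)
    · intro k hk
      simp only [hB, Finset.coe_filter, Set.mem_setOf_eq, Finset.mem_range] at hk
      obtain ⟨hkx, hbwtk⟩ := hk
      have hkN : k < N := lt_trans hkx hx
      have hSAk : SA k < N := SA_lt hSA hkN
      have hSAk0 : SA k ≠ 0 := by
        intro h
        rw [bwtArr, if_pos h] at hbwtk
        exact hcbot hbwtk.symm
      obtain ⟨hzN, hzSA⟩ := invSA_spec hSA (p := SA k - 1) (by omega)
      set z := invSA SA N (SA k - 1) with hzdef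
      have hheadz : (mP Q).getD (SA z) ⊥ = c := by
        rw [hzSA, ← hbwtk, bwtArr, if_neg hSAk0]
      have hdropz : (mP Q).drop (SA z) = c :: (mP Q).drop (SA k) := by
        rw [drop_succ_getD (by omega : SA z < N), hheadz, hzSA,
          Nat.sub_add_cancel (by omega)]
      have hzy : z < y := by
        have hlex := hSA.2 k x hkx hx
        have hlex2 : List.Lex (· < ·) ((mP Q).drop (SA z)) ((mP Q).drop (SA y)) := by
          rw [hdropz, hdropy]
          exact List.Lex.cons hlex
        exact rank_lt_of_lex hSA hzN hyN hlex2
      refine ⟨z, ?_, ?_⟩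
      · simp only [hA, Finset.coe_filter, Set.mem_setOf_eq, Finset.mem_range]
        exact ⟨hzN, hzy, hheadz⟩
      · show invSA SA N (SA z + 1) = k
        rw [hzSA, Nat.sub_add_cancel (by omega)]
        exact invSA_SA hSA hkN
  have hLF : LF (mP Q) SA x = Cfun (mP Q) c + B.card := by
    have hfilter : ((Finset.range x).filter
        (fun i => decide (bwtArr (mP Q) SA i = bwtArr (mP Q) SA x) = true)) = B := by
      rw [hB]
      exact Finset.filter_congr (fun k _ => by rw [hc]; simp)
    rw [LF, length_filter_range, hfilter]
  have hLFy : LF (mP Q) SA x = y := by rw [hLF, ← hAB]; exact hyCard.symm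
  exact ⟨hLFy ▸ hyN, by rw [hLFy, hySA]⟩

theorem sp_mem_fwd {P : OSS α} (hQ : Q.strs = P.strs.map List.reverse)
    {i : ℕ} (hi : SA i < (mP Q).length) :
    (spA (mP Q) SA i).reverse ∈ fwdPrefixes P := by
  obtain ⟨rest, hdrop, s, hs, hsuf⟩ := sp_spec Q SA hi
  rw [hQ] at hs
  obtain ⟨t, ht, rfl⟩ := List.mem_map.1 hs
  refine ⟨t, ht, ?_⟩
  have h1 : (spA (mP Q) SA i).reverse <+: (t.reverse.map sym).reverse :=
    List.reverse_prefix.2 hsuf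
  rwa [← List.map_reverse, List.reverse_reverse] at h1

theorem fwd_mem_sp (hSA : IsSuffixArray (mP Q) SA) {P : OSS α}
    (hQ : Q.strs = P.strs.map List.reverse) {q : List (WithBot α)}
    (hq : q ∈ fwdPrefixes P) :
    ∃ i, i < (mP Q).length ∧ spA (mP Q) SA i = q.reverse := by
  obtain ⟨t, ht, hpre⟩ := hq
  have hs : t.reverse ∈ Q.strs := by rw [hQ]; exact List.mem_map_of_mem ht
  have hsuf : q.reverse <:+ t.reverse.map sym := by
    rw [List.map_reverse]
    exact List.reverse_suffix.2 hpre
  obtain ⟨p, rest, hp, hdrop⟩ := flat_occ Q.strs t.reverse hs q.reverse hsuf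
  obtain ⟨i, hi, rfl⟩ := exists_rank hSA hp
  refine ⟨i, hi, ?_⟩
  have hdrop' : (mP Q).drop (SA i) = q.reverse ++ ⊥ :: rest := hdrop
  rw [spA, hdrop', takeWhile_sep _ _ (suffix_map_sym_nobot hsuf)]

theorem rank_lt_of_sp_proper (hSA : IsSuffixArray (mP Q) SA) {k i : ℕ}
    (hk : k < (mP Q).length) (hi : i < (mP Q).length)
    (hpre : spA (mP Q) SA k <+: spA (mP Q) SA i) (hne : spA (mP Q) SA k ≠ spA (mP Q) SA i) :
    k < i := by
  obtain ⟨r, hr⟩ := hpre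
  cases r with
  | nil => exact absurd (by rw [← hr]; simp) hne
  | cons d r' =>
    have hd : d ≠ ⊥ := sp_nobot (mP Q) SA i d (by rw [← hr]; simp)
    obtain ⟨restk, hdk, _⟩ := sp_spec Q SA (SA_lt hSA hk)
    obtain ⟨resti, hdi, _⟩ := sp_spec Q SA (SA_lt hSA hi)
    rw [← hr] at hdi
    have hlex : List.Lex (· < ·) ((mP Q).drop (SA k)) ((mP Q).drop (SA i)) := by
      rw [hdk, hdi, List.append_assoc]
      exact lex_append_cons (Ne.bot_lt hd) _ _ _
    exact rank_lt_of_lex hSA hk hi hlex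

theorem failCand_iff (hSA : IsSuffixArray (mP Q) SA) {i k : ℕ} (hi : i < (mP Q).length) :
    FailCand (mP Q) SA i k ↔ k < i ∧ spA (mP Q) SA k <+: spA (mP Q) SA i := by
  constructor
  · rintro ⟨hki, hall⟩
    refine ⟨hki, ?_⟩
    have hmain : ∀ l, k ≤ l → l ≤ i → spA (mP Q) SA k <+: (mP Q).drop (SA l) := by
      intro l hkl hli
      induction l, hkl using Nat.le_induction with
      | base => exact sp_prefix (mP Q) SA k
      | succ l hl ih =>
        have hlcp := hall (l + 1) (by omega) hli
        rw [lcpP, if_neg (by omega : ¬ l + 1 = 0)] at hlcp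
        simp only [Nat.add_sub_cancel] at hlcp
        have h1 : lrs (mP Q) SA k ≤ lcpLen ((mP Q).drop (SA l)) ((mP Q).drop (SA (l+1))) :=
          le_trans hlcp (min_le_left _ _)
        have hih := ih (by omega)
        have htk := take_lcpLen_eq ((mP Q).drop (SA l)) ((mP Q).drop (SA (l+1)))
        have htake : ((mP Q).drop (SA l)).take (lrs (mP Q) SA k)
            = ((mP Q).drop (SA (l+1))).take (lrs (mP Q) SA k) := by
          have := congrArg (List.take (lrs (mP Q) SA k)) htk
          rwa [List.take_take, List.take_take, min_eq_left h1] at this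
        have hihe := List.prefix_iff_eq_take.1 hih
        refine List.prefix_iff_eq_take.2 ?_
        rw [show (spA (mP Q) SA k).length = lrs (mP Q) SA k from rfl] at hihe ⊢
        rw [← htake]
        exact hihe
      -- end
    have hfin := hmain i (le_of_lt hki) le_rfl
    refine prefix_takeWhile hfin ?_
    intro c hc
    exact List.mem_takeWhile_imp (p := fun c => decide (c ≠ ⊥))
      (l := (mP Q).drop (SA k)) hc
  · rintro ⟨hki, hpre⟩
    refine ⟨hki, ?_⟩
    intro l hkl hli
    have hlN : l < (mP Q).length := by omega
    have hpk : spA (mP Q) SA k <+: (mP Q).drop (SA k) := sp_prefix (mP Q) SA k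
    have hpi : spA (mP Q) SA k <+: (mP Q).drop (SA i) :=
      hpre.trans (sp_prefix (mP Q) SA i)
    have hpl : spA (mP Q) SA k <+: (mP Q).drop (SA l) :=
      sandwich_sp hSA (by omega : k ≤ l) hli hi hpk hpi
    have hpl1 : spA (mP Q) SA k <+: (mP Q).drop (SA (l - 1)) :=
      sandwich_sp hSA (by omega : k ≤ l - 1) (by omega) hi hpk hpi
    rw [lcpP, if_neg (by omega : ¬ l = 0)]
    have h1 : lrs (mP Q) SA k ≤ lcpLen ((mP Q).drop (SA (l-1))) ((mP Q).drop (SA l)) :=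
      length_le_lcpLen hpl1 hpl
    have h2 : lrs (mP Q) SA k ≤ lrs (mP Q) SA l := by
      have : spA (mP Q) SA k <+: spA (mP Q) SA l := by
        refine prefix_takeWhile hpl ?_
        intro c hc
        exact List.mem_takeWhile_imp (p := fun c => decide (c ≠ ⊥))
          (l := (mP Q).drop (SA k)) hc
      rw [lrs_eq_sp, lrs_eq_sp]
      exact this.length_le
    exact le_min h1 h2

theorem fwd_closed {P : OSS α} {r q : List (WithBot α)} (hq : q ∈ fwdPrefixes P)
    (hr : r <+: q) : r ∈ fwdPrefixes P := by
  obtain ⟨t, ht, hpre⟩ := hq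
  exact ⟨t, ht, hr.trans hpre⟩

end Main

section ACTAux

variable {β : Type*}

theorem ACTedge_of_snoc {Pref : Set (List β)} {p q : List β} {c : β}
    (hp : p ∈ Pref) (hq : q ∈ Pref) (hq' : q = p ++ [c]) : ACTedge Pref p q := by
  subst hq'
  refine ⟨hp, hq, ?_, List.prefix_append _ _, ?_⟩
  · intro h
    have := congrArg List.length h
    simp at this
  · intro r hr hrne hrpre
    have h1 := hrpre.length_le
    simp only [List.length_append, List.length_singleton] at h1
    rcases eq_or_lt_of_le h1 with h2 | h2
    · exact absurd (hrpre.eq_of_length (by simp [h2])) hrne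
    · omega

theorem snoc_of_ACTedge {Pref : Set (List β)}
    (hclosed : ∀ r q : List β, q ∈ Pref → r <+: q → r ∈ Pref) {p q : List β}
    (h : ACTedge Pref p q) : ∃ c, q = p ++ [c] := by
  obtain ⟨hp, hq, hne, hpre, hmax⟩ := h
  have hlt : p.length < q.length := by
    rcases eq_or_lt_of_le hpre.length_le with h1 | h1
    · exact absurd (hpre.eq_of_length h1) hne
    · exact h1
  have hq' : q.take (q.length - 1) ∈ Pref := hclosed _ _ hq (List.take_prefix _ _)
  have hlen' : (q.take (q.length - 1)).length = q.length - 1 := by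
    rw [List.length_take]; omega
  have hne' : q.take (q.length - 1) ≠ q := by
    intro h
    have := congrArg List.length h
    rw [hlen'] at this
    omega
  have hle := hmax _ hq' hne' (List.take_prefix _ _)
  rw [hlen'] at hle
  obtain ⟨dr, hdr⟩ := hpre
  have hdrlen : dr.length = 1 := by
    have := congrArg List.length hdr
    simp only [List.length_append] at this
    omega
  obtain ⟨c, rfl⟩ := List.length_eq_one_iff.1 hdrlen
  exact ⟨c, hdr.symm⟩

end ACTAux

/-- For the reversed ordered set of strings `←P` (set
`{reverse s : s ∈ P.S}` enumerated as `reverse t_1, …, reverse t_n`), `Dec_Pre` is a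
bijection from `Decomp_BWT(←P)` onto `Prefix(P.S)`, under which `A_T(←P)` is the
longest-proper-prefix relation (so `(Decomp_BWT(←P), A_T(←P)) ≅ ACT(P.S)`) and
`A_F(←P)` is the longest-proper-suffix relation (so
`(Decomp_BWT(←P), A_F(←P)) ≅ ACFL(P.S)`). -/
theorem reversed_iso_ACT_ACFL [Fintype α] [LinearOrder α] (P Q : OSS α)
    (hQ : Q.strs = P.strs.map List.reverse)
    (SA : ℕ → ℕ) (hSA : IsSuffixArray (mP Q) SA) :
    Set.BijOn (decPre (mP Q) SA) (DecompBWT (mP Q) SA) (fwdPrefixes P) ∧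
    (∀ u v : ℕ × ℕ, u ∈ DecompBWT (mP Q) SA → v ∈ DecompBWT (mP Q) SA →
      ((u, v) ∈ AT (mP Q) SA ↔
        ACTedge (fwdPrefixes P) (decPre (mP Q) SA u) (decPre (mP Q) SA v))) ∧
    (∀ u v : ℕ × ℕ, u ∈ DecompBWT (mP Q) SA → v ∈ DecompBWT (mP Q) SA →
      ((u, v) ∈ AF (mP Q) SA ↔
        ACFLedge (fwdPrefixes P) (decPre (mP Q) SA u) (decPre (mP Q) SA v))) := by
  classical
  have hbij : Set.BijOn (decPre (mP Q) SA) (DecompBWT (mP Q) SA) (fwdPrefixes P) := by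
    refine ⟨?_, ?_, ?_⟩
    · intro u hu
      rw [decPre_eq]
      exact sp_mem_fwd hQ (SA_lt hSA (by have := hu.1; have := hu.2.1; omega))
    · intro u hu v hv h
      rw [decPre_eq, decPre_eq] at h
      exact decomp_unique hSA hu hv (List.reverse_injective h)
    · intro q hq
      obtain ⟨i, hiN, hsp⟩ := fwd_mem_sp hSA hQ hq
      obtain ⟨u, hu, hspu, -, -⟩ := decomp_exists hSA hiN
      exact ⟨u, hu, by rw [decPre_eq, hspu, hsp, List.reverse_reverse]⟩
  refine ⟨hbij, ?_, ?_⟩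
  · -- A_T ↔ ACT
    intro u v hu hv
    have huN : u.1 < (mP Q).length := by have := hu.1; have := hu.2.1; omega
    have hvN : v.1 < (mP Q).length := by have := hv.1; have := hv.2.1; omega
    constructor
    · rintro ⟨-, -, x, hx1, hx2, hbx, hLF1, hLF2⟩
      dsimp only at hx1 hx2 hbx hLF1 hLF2
      have hxN : x < (mP Q).length := by have := hu.2.1; omega
      have hspx : spA (mP Q) SA x = spA (mP Q) SA u.1 :=
        mem_decomp_sp_const hSA hu hx1 hx2
      obtain ⟨hLFN, hLFSA⟩ := LF_spec hSA hxN hbx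
      have hSAx0 : SA x ≠ 0 := fun h => hbx (by rw [bwtArr, if_pos h])
      have hSAxN := SA_lt hSA hxN
      have hcval : bwtArr (mP Q) SA x = (mP Q).getD (SA x - 1) ⊥ := by
        rw [bwtArr, if_neg hSAx0]
      have hdrop : (mP Q).drop (SA (LF (mP Q) SA x))
          = bwtArr (mP Q) SA x :: (mP Q).drop (SA x) := by
        rw [hLFSA, drop_succ_getD (by omega : SA x - 1 < (mP Q).length), ← hcval,
          Nat.sub_add_cancel (by omega)]
      have hspLF : spA (mP Q) SA (LF (mP Q) SA x)
          = bwtArr (mP Q) SA x :: spA (mP Q) SA x := by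
        rw [spA, hdrop, List.takeWhile_cons_of_pos (by simpa using hbx)]
        rfl
      have hspv : spA (mP Q) SA v.1 = bwtArr (mP Q) SA x :: spA (mP Q) SA u.1 := by
        rw [← hspx, ← hspLF]
        exact (mem_decomp_sp_const hSA hv hLF1 hLF2).symm
      rw [decPre_eq, decPre_eq]
      refine ACTedge_of_snoc (c := bwtArr (mP Q) SA x) (sp_mem_fwd hQ (SA_lt hSA huN))
        (sp_mem_fwd hQ (SA_lt hSA hvN)) ?_
      rw [hspv, List.reverse_cons]
    · intro h
      rw [decPre_eq, decPre_eq] at h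
      obtain ⟨c, hc'⟩ := snoc_of_ACTedge (fun r q hq hr => fwd_closed hq hr) h
      have hspv : spA (mP Q) SA v.1 = c :: spA (mP Q) SA u.1 := by
        have h2 := congrArg List.reverse hc'
        rwa [List.reverse_reverse, List.reverse_append, List.reverse_reverse] at h2
      have hcbot : c ≠ ⊥ :=
        sp_nobot (mP Q) SA v.1 c (by rw [hspv]; exact List.mem_cons_self)
      obtain ⟨rest, hdropv, -⟩ := sp_spec Q SA (SA_lt hSA hvN)
      have hlenv : (spA (mP Q) SA v.1).length = (spA (mP Q) SA u.1).length + 1 := by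
        rw [hspv]; rfl
      have hSAv1 : SA v.1 + 1 < (mP Q).length := by
        have hlen := congrArg List.length hdropv
        simp only [List.length_drop, List.length_append, List.length_cons] at hlen
        have := SA_lt hSA hvN
        omega
      obtain ⟨hxN, hxSA⟩ := invSA_spec hSA hSAv1
      set x := invSA SA (mP Q).length (SA v.1 + 1) with hxdef
      have h2 := drop_succ_getD (SA_lt hSA hvN)
      rw [hdropv, hspv, List.cons_append] at h2
      obtain ⟨hgetd, htail⟩ := List.cons_eq_cons.1 h2
      have hdropx : (mP Q).drop (SA x) = spA (mP Q) SA u.1 ++ ⊥ :: rest := by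
        rw [hxSA, ← htail]
      have hspx : spA (mP Q) SA x = spA (mP Q) SA u.1 := by
        rw [spA, hdropx, takeWhile_sep _ _ (sp_nobot (mP Q) SA u.1)]
      have hbounds := mem_decomp_of_sp hSA hu hxN hspx
      have hSAx0 : SA x ≠ 0 := by rw [hxSA]; exact Nat.succ_ne_zero _
      have hbwt : bwtArr (mP Q) SA x = c := by
        rw [bwtArr, if_neg hSAx0, hxSA, Nat.add_sub_cancel]
        exact hgetd.symm
      have hbne : bwtArr (mP Q) SA x ≠ ⊥ := by rw [hbwt]; exact hcbot
      obtain ⟨hLFN, hLFSA⟩ := LF_spec hSA hxN hbne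
      have hLFeq : LF (mP Q) SA x = v.1 := by
        refine hSA.1.2.1 hLFN hvN ?_
        rw [hLFSA, hxSA, Nat.add_sub_cancel]
      exact ⟨hu, hv, x, hbounds.1, hbounds.2, hbne, by rw [hLFeq],
        by rw [hLFeq]; exact hv.1⟩
  · -- A_F ↔ ACFL
    intro u v hu hv
    have huN : u.1 < (mP Q).length := by have := hu.1; have := hu.2.1; omega
    have hvN : v.1 < (mP Q).length := by have := hv.1; have := hv.2.1; omega
    constructor
    · rintro ⟨-, -, k, hkC, hkmax, hkv1, hkv2⟩
      dsimp only at hkC hkmax hkv1 hkv2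
      have hv2N := hv.2.1
      have hkN : k < (mP Q).length := by omega
      obtain ⟨hklt, hkpre⟩ := (failCand_iff hSA huN).1 hkC
      have hkv : spA (mP Q) SA k = spA (mP Q) SA v.1 :=
        mem_decomp_sp_const hSA hv hkv1 hkv2
      have hkneq : spA (mP Q) SA k ≠ spA (mP Q) SA u.1 := by
        intro h
        have := (mem_decomp_of_sp hSA hu hkN h).1
        omega
      rw [decPre_eq, decPre_eq]
      refine ⟨sp_mem_fwd hQ (SA_lt hSA huN), sp_mem_fwd hQ (SA_lt hSA hvN), ?_, ?_, ?_⟩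
      · intro h
        exact hkneq (by rw [hkv, List.reverse_injective h])
      · rw [← hkv]
        exact List.reverse_suffix.2 hkpre
      · intro r hr hrne hrsuf
        obtain ⟨k', hk'N, hspk'⟩ := fwd_mem_sp hSA hQ hr
        obtain ⟨pre, hpre⟩ := hrsuf
        have hrrev : r.reverse <+: spA (mP Q) SA u.1 := by
          refine ⟨pre.reverse, ?_⟩
          have h3 := congrArg List.reverse hpre
          rwa [List.reverse_append, List.reverse_reverse] at h3
        have hk'pre : spA (mP Q) SA k' <+: spA (mP Q) SA u.1 := by
          rw [hspk']; exact hrrev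
        have hk'ne : spA (mP Q) SA k' ≠ spA (mP Q) SA u.1 := by
          intro h2
          exact hrne (by rw [← List.reverse_reverse r, ← hspk', h2])
        have hk'lt : k' < u.1 := rank_lt_of_sp_proper hSA hk'N huN hk'pre hk'ne
        have hk'C : FailCand (mP Q) SA u.1 k' :=
          (failCand_iff hSA huN).2 ⟨hk'lt, hk'pre⟩
        have hk'k : k' ≤ k := hkmax k' hk'C
        by_contra hlen
        push_neg at hlen
        have hlen1 : (spA (mP Q) SA k).length < (spA (mP Q) SA k').length := by
          have e1 : (spA (mP Q) SA k').length = r.length := by rw [hspk']; simp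
          have e2 : (spA (mP Q) SA k).length = (spA (mP Q) SA v.1).length := by rw [hkv]
          simp only [List.length_reverse] at hlen
          omega
        have hkk' : spA (mP Q) SA k <+: spA (mP Q) SA k' :=
          List.prefix_of_prefix_length_le hkpre hk'pre (le_of_lt hlen1)
        have hlt2 : k < k' := rank_lt_of_sp_proper hSA hkN hk'N hkk'
          (fun h2 => by rw [h2] at hlen1; omega)
        omega
    · intro h
      rw [decPre_eq, decPre_eq] at h
      obtain ⟨hp, hq, hne, hsuf, hmax⟩ := h
      have hvpre : spA (mP Q) SA v.1 <+: spA (mP Q) SA u.1 := List.reverse_suffix.1 hsuf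
      have hvne : spA (mP Q) SA v.1 ≠ spA (mP Q) SA u.1 := fun h2 => hne (by rw [h2])
      have hv1lt : v.1 < u.1 := rank_lt_of_sp_proper hSA hvN huN hvpre hvne
      have hv1C : FailCand (mP Q) SA u.1 v.1 := (failCand_iff hSA huN).2 ⟨hv1lt, hvpre⟩
      set k := Nat.findGreatest (fun k => FailCand (mP Q) SA u.1 k) u.1 with hkdef
      have hkC : FailCand (mP Q) SA u.1 k :=
        Nat.findGreatest_spec (le_of_lt hv1lt) hv1C
      have hkmax : ∀ k', FailCand (mP Q) SA u.1 k' → k' ≤ k := by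
        intro k' hk'
        by_contra hgt
        push_neg at hgt
        exact Nat.findGreatest_is_greatest hgt (le_of_lt hk'.1) hk'
      obtain ⟨hklt, hkpre⟩ := (failCand_iff hSA huN).1 hkC
      have hkN : k < (mP Q).length := by omega
      have hkne : spA (mP Q) SA k ≠ spA (mP Q) SA u.1 := by
        intro h2
        have := (mem_decomp_of_sp hSA hu hkN h2).1
        omega
      have hkv1 : v.1 ≤ k := hkmax v.1 hv1C
      have hkeq : spA (mP Q) SA k = spA (mP Q) SA v.1 := by
        rcases le_total (spA (mP Q) SA k).length (spA (mP Q) SA v.1).length with hle | hle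
        · have hpre2 : spA (mP Q) SA k <+: spA (mP Q) SA v.1 :=
            List.prefix_of_prefix_length_le hkpre hvpre hle
          by_contra hne2
          have := rank_lt_of_sp_proper hSA hkN hvN hpre2 hne2
          omega
        · have hpre2 : spA (mP Q) SA v.1 <+: spA (mP Q) SA k :=
            List.prefix_of_prefix_length_le hvpre hkpre hle
          by_contra hne2
          have hrPref := sp_mem_fwd hQ (SA_lt hSA hkN)
          have h1 := hmax _ hrPref
            (fun h2 => hkne (List.reverse_injective (by simpa using h2)))
            (List.reverse_suffix.2 hkpre)
          simp only [List.length_reverse] at h1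
          exact hne2 ((hpre2.eq_of_length (le_antisymm hle h1)).symm)
      have hbounds := mem_decomp_of_sp hSA hv hkN hkeq
      exact ⟨hu, hv, k, hkC, hkmax, hbounds.1, hbounds.2⟩

end BwtXbw
end

section
/- Let P be an ordered set of strings and let u = [i,j] ∈ Decomp_BWT(P). Then the cardinality j − i + 1 of u equals the number of strings s ∈ P.S such that reverse(Dec_Pre[u]) is a suffix of s. -/
namespace BwtXbw

variable {α β : Type*}

section AuxLemmas

/-- The multi-string built from a plain list of strings. -/
def Mls (ls : List (List α)) : List (WithBot α) :=
  (ls.map (fun s => s.map sym ++ [⊥])).flatten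

lemma mP_eq_Mls (P : OSS α) : mP P = Mls P.strs := rfl

lemma Mls_cons (t : List α) (ls : List (List α)) :
    Mls (t :: ls) = (t.map sym ++ [⊥]) ++ Mls ls := by
  simp [Mls]

lemma lcpLen_take [DecidableEq β] :
    ∀ x y : List β, x.take (lcpLen x y) = y.take (lcpLen x y)
  | [], y => by simp [lcpLen]
  | a :: s, [] => by simp [lcpLen]
  | a :: s, b :: t => by
    by_cases h : a = b
    · subst h
      simp [lcpLen, lcpLen_take s t]
    · simp [lcpLen, h]

lemma take_eq_of_le_lcpLen [DecidableEq β] {x y : List β} {n : ℕ}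
    (h : n ≤ lcpLen x y) : x.take n = y.take n := by
  calc x.take n = (x.take (lcpLen x y)).take n := by
        rw [List.take_take, Nat.min_eq_left h]
    _ = (y.take (lcpLen x y)).take n := by rw [lcpLen_take x y]
    _ = y.take n := by rw [List.take_take, Nat.min_eq_left h]

lemma lcpLen_append_le [DecidableEq β] :
    ∀ (q x y : List β), q.length ≤ lcpLen (q ++ x) (q ++ y)
  | [], _, _ => Nat.zero_le _
  | a :: q, x, y => by
    simpa [lcpLen] using Nat.succ_le_succ (lcpLen_append_le q x y)

lemma lex_strip {β : Type*} [Preorder β] :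
    ∀ (q x y : List β), List.Lex (· < ·) (q ++ x) (q ++ y) → List.Lex (· < ·) x y
  | [], _, _, h => h
  | a :: q, x, y, h => by
    cases h with
    | rel h1 => exact absurd h1 (lt_irrefl _)
    | cons h1 => exact lex_strip q x y h1

lemma lex_between {β : Type*} [Preorder β] :
    ∀ (q x y z : List β), q <+: x → q <+: z →
      List.Lex (· < ·) x y → List.Lex (· < ·) y z → q <+: y
  | [], _, _, _, _, _, _, _ => List.nil_prefix
  | a :: q, x, y, z, hx, hz, hxy, hyz => by
    obtain ⟨x', rfl⟩ := hx
    obtain ⟨z', rfl⟩ := hz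
    cases y with
    | nil => exact absurd hxy (fun h => by cases h)
    | cons b y' =>
      simp only [List.cons_append] at hxy hyz
      cases hxy with
      | rel h1 =>
        cases hyz with
        | rel h2 => exact absurd h2 (lt_asymm h1)
        | cons h2 => exact absurd h1 (lt_irrefl _)
      | cons h1 =>
        cases hyz with
        | rel h2 => exact absurd h2 (lt_irrefl _)
        | cons h2 =>
          exact List.cons_prefix_cons.mpr
            ⟨rfl, lex_between q _ y' _ ⟨x', rfl⟩ ⟨z', rfl⟩ h1 h2⟩

lemma prefix_of_append_bot :
    ∀ (q s y : List (WithBot α)),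
      (∀ c ∈ q, c ≠ ⊥) → q <+: s ++ ⊥ :: y → q <+: s
  | [], s, y, _, _ => List.nil_prefix
  | a :: q, [], y, hq, h => by
    rw [List.nil_append] at h
    exact absurd (List.cons_prefix_cons.mp h).1 (hq a (by simp))
  | a :: q, b :: s, y, hq, h => by
    obtain ⟨h1, h2⟩ := List.cons_prefix_cons.mp h
    exact List.cons_prefix_cons.mpr
      ⟨h1, prefix_of_append_bot q s y (fun c hc => hq c (by simp [hc])) h2⟩

lemma eq_of_botfree_prefix :
    ∀ (q s x y : List (WithBot α)),
      (∀ c ∈ q, c ≠ ⊥) → (∀ c ∈ s, c ≠ ⊥) → q ++ ⊥ :: x <+: s ++ ⊥ :: y → q = s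
  | [], [], _, _, _, _, _ => rfl
  | [], b :: s, x, y, _, hs, h => by
    exact absurd (List.cons_prefix_cons.mp h).1.symm (hs b (by simp))
  | a :: q, [], x, y, hq, _, h => by
    exact absurd (List.cons_prefix_cons.mp h).1 (hq a (by simp))
  | a :: q, b :: s, x, y, hq, hs, h => by
    obtain ⟨h1, h2⟩ := List.cons_prefix_cons.mp h
    rw [h1, eq_of_botfree_prefix q s x y (fun c hc => hq c (by simp [hc]))
      (fun c hc => hs c (by simp [hc])) h2]

lemma exists_bot_split [DecidableEq α] :
    ∀ (l : List (WithBot α)), ⊥ ∈ l →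
      ∃ r, l = l.takeWhile (fun c => decide (c ≠ ⊥)) ++ ⊥ :: r
  | [], h => absurd h (by simp)
  | a :: l, h => by
    by_cases ha : a = ⊥
    · subst ha
      exact ⟨l, by simp [List.takeWhile_cons]⟩
    · have hbl : ⊥ ∈ l := by
        rcases List.mem_cons.mp h with h' | h'
        · exact absurd h'.symm ha
        · exact h'
      obtain ⟨r, hr⟩ := exists_bot_split l hbl
      refine ⟨r, ?_⟩
      rw [List.takeWhile_cons, if_pos (by simp [ha]), List.cons_append, ← hr]

lemma bot_mem_drop :
    ∀ (ls : List (List α)) (p : ℕ), p < (Mls ls).length → ⊥ ∈ (Mls ls).drop p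
  | [], p, h => by simp [Mls] at h
  | t :: ls, p, h => by
    rw [Mls_cons] at h ⊢
    by_cases hp : p ≤ (t.map sym).length
    · rw [List.append_assoc, List.drop_append_of_le_length hp]
      simp
    · have hlen : (t.map sym ++ [⊥]).length = t.length + 1 := by simp
      have hpe : p = (t.map sym ++ [⊥]).length + (p - (t.length + 1)) := by
        simp only [List.length_map] at hp
        rw [hlen]; omega
      rw [hpe, List.drop_length_add_append]
      apply bot_mem_drop ls
      rw [List.length_append, hlen] at h
      simp only [List.length_map] at hp
      omega

lemma countP_range_eq (n c : ℕ) (h : c < n) :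
    ((List.range n).filter (fun p => decide (p = c))).length = 1 := by
  induction n with
  | zero => omega
  | succ n ih =>
    rw [List.range_succ, List.filter_append, List.length_append]
    by_cases hc : c = n
    · subst hc
      have h0 : (List.range c).filter (fun p => decide (p = c)) = [] := by
        rw [List.filter_eq_nil_iff]
        intro a ha
        simp only [List.mem_range] at ha
        simp; omega
      simp [h0]
    · have h' : c < n := by omega
      rw [ih h']
      have hnc : ¬ (n = c) := fun he => hc he.symm
      simp [hnc]

lemma count_lemma [DecidableEq α] (w : List (WithBot α)) (hw : ∀ c ∈ w, c ≠ ⊥) :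
    ∀ ls : List (List α),
      ((List.range (Mls ls).length).filter
          (fun p => decide (w ++ [⊥] <+: (Mls ls).drop p))).length
        = (ls.filter (fun s => decide (w <:+ s.map sym))).length
  | [] => by simp [Mls]
  | t :: ls => by
    have IH := count_lemma w hw ls
    have hblen : (t.map sym ++ [⊥]).length = t.length + 1 := by simp
    have hA : ((List.range (t.length + 1)).filter
        (fun p => decide (w ++ [⊥] <+: ((t.map sym ++ [⊥]) ++ Mls ls).drop p))).length
        = (if w <:+ t.map sym then 1 else 0) := by
      have hpred : ∀ p ∈ List.range (t.length + 1),
          (decide (w ++ [⊥] <+: ((t.map sym ++ [⊥]) ++ Mls ls).drop p))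
          = decide (p = t.length - w.length ∧ w <:+ t.map sym) := by
        intro p hp
        have hp' : p < t.length + 1 := List.mem_range.mp hp
        have hple : p ≤ (t.map sym).length := by simp; omega
        have hdropp : ((t.map sym ++ [⊥]) ++ Mls ls).drop p
            = (t.map sym).drop p ++ ⊥ :: Mls ls := by
          rw [List.append_assoc, List.drop_append_of_le_length hple,
            List.singleton_append]
        apply decide_eq_decide.mpr
        rw [hdropp]
        constructor
        · intro hpre
          have hdf : ∀ c ∈ (t.map sym).drop p, c ≠ ⊥ := by
            intro c hc
            obtain ⟨a, _, rfl⟩ := List.mem_map.mp (List.mem_of_mem_drop hc)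
            exact WithBot.coe_ne_bot
          have hwe : w = (t.map sym).drop p :=
            eq_of_botfree_prefix w _ [] (Mls ls) hw hdf hpre
          have hlw : w.length = t.length - p := by
            rw [hwe]; simp
          constructor
          · simp only [List.length_map] at hple; omega
          · rw [hwe]; exact List.drop_suffix p _
        · rintro ⟨rfl, hsuf⟩
          obtain ⟨pre, hpre⟩ := hsuf
          have hplen : t.length - w.length = pre.length := by
            have := congrArg List.length hpre
            simp only [List.length_append, List.length_map] at this
            omega
          have hde : (t.map sym).drop (t.length - w.length) = w := by
            rw [hplen, ← hpre, List.drop_left]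
          rw [hde]
          exact ⟨Mls ls, by simp⟩
      rw [List.filter_congr hpred]
      by_cases hsuf : w <:+ t.map sym
      · rw [if_pos hsuf]
        have hc : t.length - w.length < t.length + 1 := by omega
        calc ((List.range (t.length + 1)).filter
              (fun p => decide (p = t.length - w.length ∧ w <:+ t.map sym))).length
            = ((List.range (t.length + 1)).filter
              (fun p => decide (p = t.length - w.length))).length := by
              apply congrArg
              apply List.filter_congr
              intro x _
              simp [hsuf]
          _ = 1 := countP_range_eq _ _ hc
      · rw [if_neg hsuf]
        have h0 : (List.range (t.length + 1)).filter
            (fun p => decide (p = t.length - w.length ∧ w <:+ t.map sym)) = [] := by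
          rw [List.filter_eq_nil_iff]
          intro a _
          simp [hsuf]
        rw [h0]; rfl
    have hdrop : ∀ x : ℕ, ((t.map sym ++ [⊥]) ++ Mls ls).drop ((t.length + 1) + x)
        = (Mls ls).drop x := by
      intro x
      rw [← hblen]
      exact List.drop_length_add_append x
    have hB : (((List.range (Mls ls).length).map (fun x => (t.length + 1) + x)).filter
        (fun p => decide (w ++ [⊥] <+: ((t.map sym ++ [⊥]) ++ Mls ls).drop p))).length
        = ((List.range (Mls ls).length).filter
            (fun p => decide (w ++ [⊥] <+: (Mls ls).drop p))).length := by
      rw [← List.countP_eq_length_filter, ← List.countP_eq_length_filter,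
        List.countP_map]
      apply congrFun
      apply congrArg
      funext x
      simp only [Function.comp_apply, hdrop x]
    rw [Mls_cons, List.length_append, hblen, List.range_add, List.filter_append,
      List.length_append, hA, hB, IH, List.filter_cons]
    by_cases hsuf : w <:+ t.map sym <;> simp [hsuf] <;> omega

end AuxLemmas

/-- The cardinality of an interval `u ∈ Decomp_BWT(P)` equals the
number of strings `s ∈ P.S` having `reverse(Dec_Pre[u])` as a suffix. -/
theorem card_interval_eq_count_suffix [Fintype α] [LinearOrder α] (P : OSS α)
    (SA : ℕ → ℕ) (hSA : IsSuffixArray (mP P) SA)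
    (u : ℕ × ℕ) (hu : u ∈ DecompBWT (mP P) SA) :
    u.2 - u.1 + 1 =
      (P.strs.filter
        (fun s => decide ((decPre (mP P) SA u).reverse <:+ s.map sym))).length := by
  obtain ⟨⟨hmapsto, hinj, hsurj⟩, hsorted⟩ := hSA
  obtain ⟨hle, hultN, hint, hstart, hend⟩ := hu
  have hmM : mP P = Mls P.strs := rfl
  set m : List (WithBot α) := mP P with hmdef
  set N : ℕ := m.length with hNdef
  set sp : ℕ → List (WithBot α) :=
    fun p => (m.drop p).takeWhile (fun c => decide (c ≠ ⊥)) with hspdef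
  have hSAlt : ∀ {k : ℕ}, k < N → SA k < N := fun {k} hk => hmapsto hk
  have hspfree : ∀ p, ∀ c ∈ sp p, c ≠ ⊥ := by
    intro p c hc
    simpa using List.mem_takeWhile_imp hc
  have hsplit : ∀ p, p < N → ∃ r, m.drop p = sp p ++ ⊥ :: r := by
    intro p hp
    exact exists_bot_split _ (bot_mem_drop P.strs p hp)
  have hlrs : ∀ k, lrs m SA k = (sp (SA k)).length := fun k => rfl
  set w : List (WithBot α) := sp (SA u.1) with hw
  have hwfree : ∀ c ∈ w, c ≠ ⊥ := hspfree _
  have hu1N : u.1 < N := lt_of_le_of_lt hle hultN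
  have hspu1 : SA u.1 < N := hSAlt hu1N
  have hdecrev : (decPre m SA u).reverse = w := by
    show ((m.drop (SA u.1)).take (lrs m SA u.1)).reverse.reverse = w
    rw [List.reverse_reverse]
    exact (List.prefix_iff_eq_take.mp (List.takeWhile_prefix _)).symm
  have hQ : ∀ p, p < N → ((w ++ [⊥] <+: m.drop p) ↔ sp p = w) := by
    intro p hp
    obtain ⟨r, hr⟩ := hsplit p hp
    constructor
    · intro h
      rw [hr] at h
      exact (eq_of_botfree_prefix w (sp p) [] r hwfree (hspfree p) h).symm
    · intro h
      rw [hr, h]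
      exact ⟨r, by simp⟩
  -- key computation: if the two neighbours have string part w, lcpP = lrs
  have key : ∀ j, j ≠ 0 → j < N → sp (SA (j - 1)) = w → sp (SA j) = w →
      lcpP m SA j = lrs m SA j := by
    intro j hj0 hjN h1 h2
    obtain ⟨r2, hr2⟩ := hsplit (SA j) (hSAlt hjN)
    obtain ⟨r3, hr3⟩ := hsplit (SA (j - 1)) (hSAlt (by omega))
    rw [lcpP, if_neg hj0]
    have hlen : lrs m SA j = w.length := by rw [hlrs, h2]
    rw [hlen, hr2, hr3, h1, h2]
    have h := lcpLen_append_le (w ++ [⊥]) r3 r2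
    simp only [List.append_assoc, List.singleton_append, List.length_append,
      List.length_singleton] at h
    exact Nat.min_eq_right (by omega)
  -- Step A: every rank in the interval has string part w
  have stepA : ∀ k, u.1 ≤ k → k ≤ u.2 → sp (SA k) = w := by
    intro k hk1
    induction k, hk1 using Nat.le_induction with
    | base => intro _; rfl
    | succ j hj ih =>
      intro hk2
      have hwj : sp (SA j) = w := ih (by omega)
      have hjN : j + 1 < N := by omega
      have hjlt : SA j < N := hSAlt (by omega)
      have hj1lt : SA (j + 1) < N := hSAlt hjN
      obtain ⟨r1, hr1⟩ := hsplit (SA j) hjlt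
      obtain ⟨r2, hr2⟩ := hsplit (SA (j + 1)) hj1lt
      have hlcp := hint (j + 1) (by omega) (by omega)
      rw [lcpP, if_neg (by omega)] at hlcp
      simp only [Nat.add_sub_cancel] at hlcp
      have hge : (sp (SA (j + 1))).length ≤ lcpLen (m.drop (SA j)) (m.drop (SA (j + 1))) := by
        rw [hlrs] at hlcp
        omega
      have htake := take_eq_of_le_lcpLen hge
      have hspeq : sp (SA (j + 1)) = (m.drop (SA (j + 1))).take ((sp (SA (j + 1))).length) :=
        List.prefix_iff_eq_take.mp (List.takeWhile_prefix _)
      have hpre : sp (SA (j + 1)) <+: m.drop (SA j) := by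
        rw [hspeq, ← htake]
        exact List.take_prefix _ _
      have hpre2 : sp (SA (j + 1)) <+: sp (SA j) := by
        rw [hr1] at hpre
        exact prefix_of_append_bot _ _ _ (hspfree _) hpre
      obtain ⟨tail, htail⟩ := hpre2
      cases tail with
      | nil =>
        rw [hwj] at htail
        simpa using htail
      | cons c tl =>
        exfalso
        have hc : c ≠ ⊥ := hspfree (SA j) c (by rw [← htail]; simp)
        have hlex := hsorted j (j + 1) (by omega) hjN
        rw [hr1, ← htail, hr2] at hlex
        have hlex' : List.Lex (· < ·)
            (sp (SA (j + 1)) ++ (c :: tl ++ ⊥ :: r1))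
            (sp (SA (j + 1)) ++ (⊥ :: r2)) := by
          simpa [List.append_assoc] using hlex
        have := lex_strip _ _ _ hlex'
        cases this with
        | rel h => simp at h
        | cons h => exact hc rfl
  -- Step B: every rank outside the interval has a different string part
  have stepB : ∀ k, k < N → sp (SA k) = w → u.1 ≤ k ∧ k ≤ u.2 := by
    intro k hkN hks
    constructor
    · by_contra hlt
      push_neg at hlt
      have h0 : u.1 ≠ 0 := by omega
      have h1N : u.1 - 1 < N := by omega
      have hmid : sp (SA (u.1 - 1)) = w := by
        rcases eq_or_lt_of_le (show k ≤ u.1 - 1 by omega) with he | hlt2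
        · rw [← he]; exact hks
        · obtain ⟨r1, hr1⟩ := hsplit (SA k) (hSAlt hkN)
          obtain ⟨r2, hr2⟩ := hsplit (SA u.1) hspu1
          have hbet := lex_between (w ++ [⊥]) (m.drop (SA k)) (m.drop (SA (u.1 - 1)))
            (m.drop (SA u.1))
            (by rw [hr1, hks]; exact ⟨r1, by simp⟩)
            (by rw [hr2]; exact ⟨r2, by simp [hw]⟩)
            (hsorted k (u.1 - 1) hlt2 h1N)
            (hsorted (u.1 - 1) u.1 (by omega) hu1N)
          exact (hQ (SA (u.1 - 1)) (hSAlt h1N)).mp hbet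
      have hkey := key u.1 h0 hu1N hmid rfl
      rcases hstart with h | h
      · exact h0 h
      · exact h hkey
    · by_contra hgt
      push_neg at hgt
      have hj : u.2 + 1 ≤ k := hgt
      have hjN : u.2 + 1 < N := lt_of_le_of_lt hj hkN
      have hmid : sp (SA (u.2 + 1)) = w := by
        rcases eq_or_lt_of_le hj with he | hlt2
        · rw [he]; exact hks
        · obtain ⟨r1, hr1⟩ := hsplit (SA u.2) (hSAlt (by omega))
          obtain ⟨r2, hr2⟩ := hsplit (SA k) (hSAlt hkN)
          have hspu2 : sp (SA u.2) = w := stepA u.2 hle le_rfl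
          have hbet := lex_between (w ++ [⊥]) (m.drop (SA u.2)) (m.drop (SA (u.2 + 1)))
            (m.drop (SA k))
            (by rw [hr1, hspu2]; exact ⟨r1, by simp⟩)
            (by rw [hr2, hks]; exact ⟨r2, by simp⟩)
            (hsorted u.2 (u.2 + 1) (by omega) hjN)
            (hsorted (u.2 + 1) k hlt2 hkN)
          exact (hQ (SA (u.2 + 1)) (hSAlt hjN)).mp hbet
      have hprev : sp (SA (u.2 + 1 - 1)) = w := by
        simpa using stepA u.2 hle le_rfl
      have hkey := key (u.2 + 1) (by omega) hjN hprev hmid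
      rcases hend with h | h
      · omega
      · exact h hkey
  -- counting via the bijection SA
  have hcard1 : ((Finset.range N).filter (fun k => u.1 ≤ k ∧ k ≤ u.2)).card
      = ((Finset.range N).filter (fun p => w ++ [⊥] <+: m.drop p)).card := by
    apply Finset.card_bij (fun k _ => SA k)
    · intro k hk
      simp only [Finset.mem_filter, Finset.mem_range] at hk ⊢
      obtain ⟨hkN, hk1, hk2⟩ := hk
      refine ⟨hSAlt hkN, ?_⟩
      exact (hQ (SA k) (hSAlt hkN)).mpr (stepA k hk1 hk2)
    · intro k1 hk1 k2 hk2 heq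
      simp only [Finset.mem_filter, Finset.mem_range] at hk1 hk2
      exact hinj (Set.mem_Iio.mpr hk1.1) (Set.mem_Iio.mpr hk2.1) heq
    · intro p hp
      simp only [Finset.mem_filter, Finset.mem_range] at hp
      obtain ⟨hpN, hpre⟩ := hp
      obtain ⟨k, hkN, hkp⟩ := hsurj (Set.mem_Iio.mpr hpN)
      have hkN' : k < N := hkN
      have hsk : sp (SA k) = w := by
        apply (hQ (SA k) (hSAlt hkN')).mp
        rw [hkp]
        exact hpre
      obtain ⟨hk1, hk2⟩ := stepB k hkN' hsk
      exact ⟨k, by simp only [Finset.mem_filter, Finset.mem_range]; exact ⟨hkN', hk1, hk2⟩, hkp⟩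
  have hcard2 : ((Finset.range N).filter (fun k => u.1 ≤ k ∧ k ≤ u.2)).card
      = u.2 - u.1 + 1 := by
    have hI : (Finset.range N).filter (fun k => u.1 ≤ k ∧ k ≤ u.2) = Finset.Icc u.1 u.2 := by
      ext k
      simp only [Finset.mem_filter, Finset.mem_range, Finset.mem_Icc]
      omega
    rw [hI, Nat.card_Icc]
    omega
  rw [hdecrev, ← count_lemma w hwfree P.strs]
  have hfin : ((List.range (Mls P.strs).length).filter
      (fun p => decide (w ++ [⊥] <+: (Mls P.strs).drop p))).length
      = ((Finset.range N).filter (fun p => w ++ [⊥] <+: m.drop p)).card := rfl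
  rw [hfin, ← hcard1, hcard2]

end BwtXbw
end

section
/- Let T be an array of n symbols of a finite alphabet Σ and let D be an interval partition of [1,n] with blocks u_1 < … < u_m such that for every block the symbols of T on that block are pairwise distinct. Suppose that for every i ∈ [1, m−1] the intersection B(T,D)[i] of the symbol sets of T on u_i and on u_{i+1} has cardinality at least 2. Then there exists an array T' valid for (T,D) with d_A(T',D) = n − m; in particular the minimum of d_A(·,D) over arrays valid for (T,D) equals n − m. -/
namespace BwtXbw

variable {α β : Type*}

lemma dA_cons_cons [DecidableEq β] (a b : β) (t : List β) :
    dA (a :: b :: t) = (if a = b then 0 else 1) + dA (b :: t) := rfl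

lemma dA_append_cons [DecidableEq β] (xs : List β) (y : β) (ys : List β) :
    dA (xs ++ y :: ys) = dA (xs ++ [y]) + dA (y :: ys) := by
  induction xs with
  | nil => simp [dA]
  | cons a xs ih =>
    cases xs with
    | nil => cases ys <;> simp [dA]
    | cons b t =>
      simp only [List.cons_append, dA_cons_cons] at *
      omega

lemma dA_le_append_singleton [DecidableEq β] (xs : List β) (y : β) :
    dA xs ≤ dA (xs ++ [y]) := by
  induction xs with
  | nil => simp [dA]
  | cons a xs ih =>
    cases xs with
    | nil => simp [dA]
    | cons b t =>
      simp only [List.cons_append, dA_cons_cons] at *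
      omega

lemma dA_append_ge [DecidableEq β] (xs ys : List β) :
    dA xs + dA ys ≤ dA (xs ++ ys) := by
  cases ys with
  | nil => simp [dA]
  | cons y t =>
    rw [dA_append_cons]
    exact Nat.add_le_add_right (dA_le_append_singleton xs y) _

lemma dA_nodup [DecidableEq β] (l : List β) (h : l.Nodup) : dA l = l.length - 1 := by
  induction l with
  | nil => simp [dA]
  | cons a l ih =>
    cases l with
    | nil => simp [dA]
    | cons b t =>
      have hab : a ≠ b := by
        intro e; exact (List.nodup_cons.1 h).1 (e ▸ (List.mem_cons_self : b ∈ b :: t))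
      rw [dA_cons_cons, if_neg hab, ih (List.nodup_cons.1 h).2]
      simp only [List.length_cons]; omega

lemma length_le_flatten_length (B : List (List β)) (h : ∀ b ∈ B, b ≠ []) :
    B.length ≤ B.flatten.length := by
  induction B with
  | nil => simp
  | cons b rest ih =>
    have hb : 1 ≤ b.length := List.length_pos_iff.2 (h b (List.mem_cons_self))
    have := ih (fun x hx => h x (List.mem_cons_of_mem _ hx))
    simp only [List.flatten_cons, List.length_append, List.length_cons]
    omega

lemma nodup_transfer [DecidableEq β] (b b' : List β) (hlen : b.length = b'.length)
    (hfin : b.toFinset = b'.toFinset) (hnd : b.Nodup) : b'.Nodup := by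
  have h1 : b.toFinset.card = b.length := by
    rw [List.card_toFinset, hnd.dedup]
  have h2 : b'.dedup.length = b'.length := by
    rw [← List.card_toFinset, ← hfin, h1, hlen]
  have h3 := (List.dedup_sublist b').eq_of_length h2
  rw [← h3]; exact List.nodup_dedup b'

lemma lower_bound_aux [DecidableEq β] :
    ∀ (B B' : List (List β)),
    List.Forall₂ (fun b b' => b.length = b'.length ∧ b.toFinset = b'.toFinset) B B' →
    (∀ b ∈ B, b ≠ []) → (∀ b ∈ B, b.Nodup) →
    B.flatten.length - B.length ≤ dA B'.flatten := by
  intro B B' hf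
  induction hf with
  | nil => simp
  | @cons b b' restB restB' h hrest ih =>
    intro hne hnd
    have hb1 : 1 ≤ b.length := List.length_pos_iff.2 (hne b (List.mem_cons_self))
    have hbnd : b'.Nodup := nodup_transfer b b' h.1 h.2 (hnd b (List.mem_cons_self))
    have hdb' : dA b' = b.length - 1 := by rw [dA_nodup b' hbnd, ← h.1]
    have hih := ih (fun x hx => hne x (List.mem_cons_of_mem _ hx))
      (fun x hx => hnd x (List.mem_cons_of_mem _ hx))
    have hge := dA_append_ge b' restB'.flatten
    have hlen := length_le_flatten_length restB (fun x hx => hne x (List.mem_cons_of_mem _ hx))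
    simp only [List.flatten_cons, List.length_append, List.length_cons]
    omega

lemma exists_arr [DecidableEq β] (B : List (List β)) :
    ∀ (c : β), B ≠ [] →
    (∀ b ∈ B, b ≠ []) → (∀ b ∈ B, b.Nodup) →
    (∀ i, i + 1 < B.length →
      2 ≤ ((B.getD i []).toFinset ∩ (B.getD (i + 1) []).toFinset).card) →
    c ∈ B.headI →
    ∃ T' : List β,
      (∃ B'' : List (List β),
        List.Forall₂ (fun b b' => b.length = b'.length ∧ b.toFinset = b'.toFinset) B B'' ∧
        B''.flatten = T') ∧
      T'.head? = some c ∧ dA T' = B.flatten.length - B.length := by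
  induction B with
  | nil => intro c h; exact absurd rfl h
  | cons b rest ih =>
    intro c _ hne hnd hint hc
    simp only [List.headI] at hc
    have hbne : b ≠ [] := hne b (List.mem_cons_self)
    have hbnd : b.Nodup := hnd b (List.mem_cons_self)
    cases rest with
    | nil =>
      refine ⟨c :: b.erase c, ⟨[c :: b.erase c], ?_, by simp⟩, by simp, ?_⟩
      · have hperm : b.Perm (c :: b.erase c) := List.perm_cons_erase hc
        exact List.Forall₂.cons ⟨hperm.length_eq, List.toFinset_eq_of_perm _ _ hperm⟩ List.Forall₂.nil
      · have hperm : b.Perm (c :: b.erase c) := List.perm_cons_erase hc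
        rw [dA_nodup _ (hperm.nodup_iff.1 hbnd), ← hperm.length_eq]
        simp
    | cons b2 rest' =>
      have h2 : 2 ≤ (b.toFinset ∩ b2.toFinset).card := by
        have := hint 0 (by simp)
        simpa using this
      obtain ⟨d, hdmem, hdc⟩ := Finset.exists_mem_ne (s := b.toFinset ∩ b2.toFinset) (by omega) c
      have hdb : d ∈ b := List.mem_toFinset.1 (Finset.mem_inter.1 hdmem).1
      have hdb2 : d ∈ b2 := List.mem_toFinset.1 (Finset.mem_inter.1 hdmem).2
      have hde : d ∈ b.erase c := (List.mem_erase_of_ne hdc).2 hdb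
      set l := (b.erase c).erase d with hl
      have hperm : b.Perm (c :: (l ++ [d])) := by
        refine (List.perm_cons_erase hc).trans (List.Perm.cons c ?_)
        exact ((List.perm_cons_erase hde).trans (List.perm_append_singleton d l).symm)
      obtain ⟨T2, ⟨B2', hf2, hfl2⟩, hh2, hdA2⟩ :=
        ih d (by simp) (fun x hx => hne x (List.mem_cons_of_mem _ hx))
          (fun x hx => hnd x (List.mem_cons_of_mem _ hx))
          (fun i hi => by
            have := hint (i + 1) (by simpa using hi)
            simpa using this)
          (by simpa [List.headI] using hdb2)
      obtain ⟨t, rfl⟩ : ∃ t, T2 = d :: t := by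
        cases T2 with
        | nil => simp at hh2
        | cons x t =>
          have hx : x = d := by simpa using hh2
          exact ⟨t, by rw [hx]⟩
      set block1 := c :: (l ++ [d]) with hb1
      refine ⟨block1 ++ d :: t, ⟨block1 :: B2', ?_, by simp [hfl2]⟩, by simp [hb1], ?_⟩
      · exact List.Forall₂.cons ⟨hperm.length_eq, List.toFinset_eq_of_perm _ _ hperm⟩ hf2
      · have e1 : dA (block1 ++ d :: t) = dA (block1 ++ [d]) + dA (d :: t) :=
          dA_append_cons _ _ _
        have e2 : dA (block1 ++ [d]) = dA block1 := by
          have : block1 ++ [d] = (c :: l) ++ d :: [d] := by simp [hb1]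
          rw [this, dA_append_cons]
          simp [dA, hb1, List.cons_append]
        have e3 : dA block1 = b.length - 1 := by
          rw [dA_nodup _ (hperm.nodup_iff.1 hbnd), ← hperm.length_eq]
        have hb1len : 1 ≤ b.length := List.length_pos_iff.2 hbne
        have hlen := length_le_flatten_length (b2 :: rest')
          (fun x hx => hne x (List.mem_cons_of_mem _ hx))
        simp only [List.flatten_cons, List.length_append, List.length_cons] at *
        omega

/-- If any two consecutive blocks of `B` share at least two symbols,
then some valid array attains `d_A = n − m`; in particular the minimum of `d_A` over
valid arrays equals `n − m`. -/
theorem dA_min_attained [Fintype β] [DecidableEq β] (B : List (List β))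
    (hne : ∀ b ∈ B, b ≠ []) (hnd : ∀ b ∈ B, b.Nodup)
    (hint : ∀ i, i + 1 < B.length →
      2 ≤ ((B.getD i []).toFinset ∩ (B.getD (i + 1) []).toFinset).card) :
    (∃ T' : List β, ValidArr B T' ∧ dA T' = B.flatten.length - B.length) ∧
    ∀ T'' : List β, ValidArr B T'' → B.flatten.length - B.length ≤ dA T'' := by
  constructor
  · cases B with
    | nil => exact ⟨[], ⟨[], List.Forall₂.nil, rfl⟩, by simp [dA]⟩
    | cons b rest =>
      have hbne : b ≠ [] := hne b (List.mem_cons_self)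
      obtain ⟨x, b', rfl⟩ := List.exists_cons_of_ne_nil hbne
      obtain ⟨T', hv, _, hd⟩ := exists_arr ((x :: b') :: rest) x (by simp) hne hnd hint
        (by simp [List.headI])
      exact ⟨T', hv, hd⟩
  · rintro T'' ⟨B', hf, rfl⟩
    exact lower_bound_aux B B' hf hne hnd

end BwtXbw
end

section
/- Let T be an array of n symbols of a finite alphabet Σ and let D be an interval partition of [1,n] such that on every block the symbols of T are pairwise distinct. Suppose the singleton interval [i,i] is a block of D. Let D_1 = {[i',j'] ∈ D : j' ≤ i} (an interval partition of [1,i]) and D_2 = {[i',j'] ∈ D : i' ≥ i} (an interval partition of [i,n], reindexed to start at 1). If T'_1 is optimal for (T[1..i], D_1) and T'_2 is optimal for (T[i..n], D_2), then the concatenation T'_1[1..i−1] followed by T'_2 is optimal for (T, D). -/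
namespace BwtXbw

variable {α β : Type*}

section Aux
variable {β : Type*}

lemma forall2_append_split {γ : Type*} {R : List γ → List γ → Prop}
    {l₁ l₂ l : List (List γ)} (h : List.Forall₂ R (l₁ ++ l₂) l) :
    ∃ u v, l = u ++ v ∧ List.Forall₂ R l₁ u ∧ List.Forall₂ R l₂ v := by
  induction l₁ generalizing l with
  | nil => exact ⟨[], l, rfl, List.Forall₂.nil, h⟩
  | cons x xs ih =>
    obtain _ | @⟨_, y, _, ys, hx, htl⟩ := h
    obtain ⟨u, v, rfl, hu, hv⟩ := ih htl
    exact ⟨y :: u, v, rfl, List.Forall₂.cons hx hu, hv⟩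

lemma dA_split [DecidableEq β] (xs ys : List β) (y : β) :
    dA (xs ++ y :: ys) = dA (xs ++ [y]) + dA (y :: ys) := by
  induction xs with
  | nil => simp [dA]
  | cons x xs ih =>
    cases xs with
    | nil => simp [dA]
    | cons x' rest =>
      simp only [List.cons_append, List.append_eq, dA] at *
      omega

lemma singleton_block_eq [DecidableEq β] {a : β} {c : List β}
    (h : ([a] : List β).length = c.length ∧ ([a] : List β).toFinset = c.toFinset) :
    c = [a] := by
  obtain ⟨hl, hs⟩ := h
  obtain ⟨x, rfl⟩ := List.length_eq_one_iff.mp hl.symm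
  simp only [List.toFinset_cons, List.toFinset_nil, LawfulSingleton.insert_empty_eq] at hs
  rw [Finset.singleton_inj] at hs
  rw [hs]

end Aux

/-- Splitting at a singleton block `[a]`: if `T₁'` is optimal for the
blocks up to (and including) the singleton block and `T₂'` is optimal for the blocks
from the singleton block on, then `T₁'` with its last symbol removed, followed by
`T₂'`, is optimal for the whole decomposition. -/
theorem optimal_split_singleton [Fintype β] [DecidableEq β]
    (B₁ B₂ : List (List β)) (a : β)
    (hne : ∀ b ∈ B₁ ++ [a] :: B₂, b ≠ []) (hnd : ∀ b ∈ B₁ ++ [a] :: B₂, b.Nodup)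
    (T₁' T₂' : List β)
    (h₁ : OptimalArr (B₁ ++ [[a]]) T₁') (h₂ : OptimalArr ([a] :: B₂) T₂') :
    OptimalArr (B₁ ++ [a] :: B₂) (T₁'.dropLast ++ T₂') := by
  classical
  set R : List β → List β → Prop :=
    fun b b' => b.length = b'.length ∧ b.toFinset = b'.toFinset with hR
  obtain ⟨⟨B₁', hf₁, hfl₁⟩, hmin₁⟩ := h₁
  obtain ⟨⟨B₂', hf₂, hfl₂⟩, hmin₂⟩ := h₂
  obtain ⟨C₁, v, rfl, hC₁, hv⟩ := forall2_append_split hf₁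
  obtain _ | @⟨_, c, _, _, hc, hnil⟩ := hv
  rcases hnil
  have hc' : c = [a] := singleton_block_eq hc
  subst hc'
  obtain _ | @⟨_, c₂, _, C₂, hc₂, hC₂⟩ := hf₂
  have hc₂' : c₂ = [a] := singleton_block_eq hc₂
  subst hc₂'
  have hT₁ : T₁' = C₁.flatten ++ [a] := by
    rw [← hfl₁]; simp
  have hT₂ : T₂' = a :: C₂.flatten := by
    rw [← hfl₂]; simp
  have hdrop : T₁'.dropLast = C₁.flatten := by
    rw [hT₁, List.dropLast_concat]
  constructor
  · refine ⟨C₁ ++ [a] :: C₂, ?_, ?_⟩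
    · exact List.rel_append hC₁ (List.Forall₂.cons ⟨rfl, rfl⟩ hC₂)
    · rw [hdrop, hT₂]; simp
  · intro T'' hT''
    obtain ⟨C, hfC, hflC⟩ := hT''
    obtain ⟨D₁, w, rfl, hD₁, hw⟩ := forall2_append_split hfC
    obtain _ | @⟨_, d, _, D₂, hd, hD₂⟩ := hw
    have hd' : d = [a] := singleton_block_eq hd
    subst hd'
    have hT'' : T'' = D₁.flatten ++ a :: D₂.flatten := by
      rw [← hflC]; simp
    have h1 : dA T₁' ≤ dA (D₁.flatten ++ [a]) := by
      apply hmin₁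
      exact ⟨D₁ ++ [[a]], List.rel_append hD₁ (List.Forall₂.cons ⟨rfl, rfl⟩ List.Forall₂.nil),
        by simp⟩
    have h2 : dA T₂' ≤ dA (a :: D₂.flatten) := by
      apply hmin₂
      exact ⟨[a] :: D₂, List.Forall₂.cons ⟨rfl, rfl⟩ hD₂, by simp⟩
    rw [hT₁] at h1
    rw [hT₂] at h2
    rw [hdrop, hT₂, hT'', dA_split C₁.flatten C₂.flatten a, dA_split D₁.flatten D₂.flatten a]
    omega

end BwtXbw
end

section
/- Let T be an array of n symbols of a finite alphabet Σ and let D be an interval partition of [1,n] with blocks u_1 < … < u_m such that on every block the symbols of T are pairwise distinct. Suppose for some i ∈ [1, m−1] the symbol sets of T on u_i = [p,q] and on u_{i+1} = [q+1, q'] are disjoint. If T'_1 is optimal for (T[1..q], {u_1, …, u_i}) and T'_2 is optimal for (T[q+1..n], {u_{i+1}, …, u_m} reindexed to start at 1), then the concatenation T'_1 followed by T'_2 is optimal for (T, D). -/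
namespace BwtXbw

variable {α β : Type*}

private lemma dA_append_aux [DecidableEq β] (s : List β) (a : β) (t : List β) :
    dA (s ++ a :: t) = dA (s ++ [a]) + dA (a :: t) := by
  induction s with
  | nil => simp [dA]
  | cons c s ih =>
    cases s with
    | nil => simp [dA]
    | cons d s' =>
      show (if c = d then 0 else 1) + dA (d :: (s' ++ a :: t)) =
        ((if c = d then 0 else 1) + dA (d :: (s' ++ [a]))) + dA (a :: t)
      simp only [List.cons_append] at ih
      omega

private lemma dA_split_s14 [DecidableEq β] (s t : List β) (x y : β)
    (hs : s.getLast? = some x) (ht : t.head? = some y) :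
    dA (s ++ t) = dA s + (if x = y then 0 else 1) + dA t := by
  obtain ⟨s', rfl⟩ : ∃ s', s = s' ++ [x] := by
    rcases s.eq_nil_or_concat with rfl | ⟨s', a, rfl⟩
    · simp at hs
    · rw [List.concat_eq_append, List.getLast?_concat] at hs
      injection hs with hax
      exact ⟨s', by simp [List.concat_eq_append, hax]⟩
  obtain ⟨t', rfl⟩ : ∃ t', t = y :: t' := by
    cases t with
    | nil => simp at ht
    | cons a t' => exact ⟨t', by simp_all⟩
  rw [List.append_assoc, List.singleton_append, dA_append_aux s' x (y :: t')]
  have h1 : dA (x :: y :: t') = (if x = y then 0 else 1) + dA (y :: t') := rfl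
  omega

private lemma valid_append' [DecidableEq β] {A C : List (List β)} {T₁ T₂ : List β}
    (h₁ : ValidArr A T₁) (h₂ : ValidArr C T₂) : ValidArr (A ++ C) (T₁ ++ T₂) := by
  obtain ⟨A', hA, rfl⟩ := h₁
  obtain ⟨C', hC, rfl⟩ := h₂
  exact ⟨A' ++ C', List.rel_append hA hC, by simp⟩

private lemma forall₂_split {γ δ : Type*} {R : γ → δ → Prop} :
    ∀ {A C : List γ} {B' : List δ}, List.Forall₂ R (A ++ C) B' →
      ∃ A' C', B' = A' ++ C' ∧ List.Forall₂ R A A' ∧ List.Forall₂ R C C' := by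
  intro A
  induction A with
  | nil => intro C B' h; exact ⟨[], B', rfl, List.Forall₂.nil, h⟩
  | cons a A ih =>
    intro C B' h
    cases h with
    | cons hab h' =>
      obtain ⟨A', C', rfl, hA, hC⟩ := ih h'
      exact ⟨_ :: A', C', rfl, List.Forall₂.cons hab hA, hC⟩

private lemma valid_split [DecidableEq β] {A C : List (List β)} {T : List β}
    (h : ValidArr (A ++ C) T) :
    ∃ T₁ T₂, T = T₁ ++ T₂ ∧ ValidArr A T₁ ∧ ValidArr C T₂ := by
  obtain ⟨B', hB, rfl⟩ := h
  obtain ⟨A', C', rfl, hA, hC⟩ := forall₂_split hB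
  exact ⟨A'.flatten, C'.flatten, by simp, ⟨A', hA, rfl⟩, ⟨C', hC, rfl⟩⟩

private lemma forall₂_singleton {γ δ : Type*} {R : γ → δ → Prop} {a : γ} {L : List δ}
    (h : List.Forall₂ R [a] L) : ∃ b, L = [b] ∧ R a b := by
  cases h with
  | cons hab h' => cases h'; exact ⟨_, rfl, hab⟩

private lemma forall₂_cons' {γ δ : Type*} {R : γ → δ → Prop} {a : γ} {l : List γ} {L : List δ}
    (h : List.Forall₂ R (a :: l) L) :
    ∃ b L', L = b :: L' ∧ R a b ∧ List.Forall₂ R l L' := by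
  cases h with | cons hab h' => exact ⟨_, _, rfl, hab, h'⟩

private lemma valid_getLast [DecidableEq β] {A : List (List β)} {b : List β} {T : List β}
    (hb : b ≠ []) (h : ValidArr (A ++ [b]) T) :
    ∃ x, T.getLast? = some x ∧ x ∈ b.toFinset := by
  obtain ⟨B', hB, rfl⟩ := h
  obtain ⟨A', C', rfl, hA, hC⟩ := forall₂_split hB
  obtain ⟨b', rfl, hbb⟩ := forall₂_singleton hC
  have hb' : b' ≠ [] := by
    intro hh
    apply hb
    have h1 := hbb.1
    rw [hh] at h1
    exact List.length_eq_zero_iff.mp (by simpa using h1)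
  refine ⟨b'.getLast hb', ?_, ?_⟩
  · rw [List.flatten_append, List.flatten_cons, List.flatten_nil, List.append_nil,
      List.getLast?_append, List.getLast?_eq_getLast hb']
    rfl
  · rw [hbb.2, List.mem_toFinset]
    exact List.getLast_mem hb'

private lemma valid_head [DecidableEq β] {C : List (List β)} {b : List β} {T : List β}
    (hb : b ≠ []) (h : ValidArr (b :: C) T) :
    ∃ y, T.head? = some y ∧ y ∈ b.toFinset := by
  obtain ⟨B', hB, rfl⟩ := h
  obtain ⟨b', C', rfl, hbb, -⟩ := forall₂_cons' hB
  obtain ⟨y, t', rfl⟩ : ∃ y t', b' = y :: t' := by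
    cases b' with
    | nil =>
      exfalso
      apply hb
      have h1 := hbb.1
      exact List.length_eq_zero_iff.mp (by simpa using h1)
    | cons y t' => exact ⟨y, t', rfl⟩
  refine ⟨y, by simp, ?_⟩
  rw [hbb.2, List.mem_toFinset]
  exact List.mem_cons_self

/-- Splitting between two consecutive blocks `bi`, `bj` with disjoint
symbol sets: if `T₁'` is optimal for the blocks up to `bi` and `T₂'` is optimal for the
blocks from `bj` on, then `T₁' ++ T₂'` is optimal for the whole decomposition. -/
theorem optimal_split_disjoint [Fintype β] [DecidableEq β]
    (B₁ B₂ : List (List β)) (bi bj : List β)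
    (hne : ∀ b ∈ B₁ ++ bi :: bj :: B₂, b ≠ [])
    (hnd : ∀ b ∈ B₁ ++ bi :: bj :: B₂, b.Nodup)
    (hdisj : bi.toFinset ∩ bj.toFinset = ∅)
    (T₁' T₂' : List β)
    (h₁ : OptimalArr (B₁ ++ [bi]) T₁') (h₂ : OptimalArr (bj :: B₂) T₂') :
    OptimalArr (B₁ ++ bi :: bj :: B₂) (T₁' ++ T₂') := by
  obtain ⟨hv₁, hm₁⟩ := h₁
  obtain ⟨hv₂, hm₂⟩ := h₂
  have hbi : bi ≠ [] := hne bi (by simp)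
  have hbj : bj ≠ [] := hne bj (by simp)
  have hBeq : B₁ ++ bi :: bj :: B₂ = (B₁ ++ [bi]) ++ bj :: B₂ := by simp
  have hne_xy : ∀ x ∈ bi.toFinset, ∀ y ∈ bj.toFinset, x ≠ y := by
    intro x hx y hy h
    apply Finset.notMem_empty x
    rw [← hdisj]
    exact Finset.mem_inter.mpr ⟨hx, by rw [h]; exact hy⟩
  have hdA : ∀ T₁ T₂ : List β, ValidArr (B₁ ++ [bi]) T₁ → ValidArr (bj :: B₂) T₂ →
      dA (T₁ ++ T₂) = dA T₁ + 1 + dA T₂ := by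
    intro T₁ T₂ hT₁ hT₂
    obtain ⟨x, hx, hxm⟩ := valid_getLast hbi hT₁
    obtain ⟨y, hy, hym⟩ := valid_head hbj hT₂
    rw [dA_split_s14 T₁ T₂ x y hx hy, if_neg (hne_xy x hxm y hym)]
  constructor
  · rw [hBeq]; exact valid_append' hv₁ hv₂
  · intro T'' hT''
    rw [hBeq] at hT''
    obtain ⟨T₁, T₂, rfl, hT₁, hT₂⟩ := valid_split hT''
    rw [hdA T₁' T₂' hv₁ hv₂, hdA T₁ T₂ hT₁ hT₂]
    have := hm₁ T₁ hT₁
    have := hm₂ T₂ hT₂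
    omega

end BwtXbw
end
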